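/- arXiv:1003.5782 — 5 statements merged into one kernel-verified Lean document; each statement's English description precedes it below -/
import Mathlib

section
/- Let G be a bi-critical, non-bipartite r-graph (r ≥ 3) containing no non-trivial odd vertex set X with |∂(X)| = r (non-trivial means |X| ≠ 1 and |X| ≠ |V(G)|−1). Then G is 3-vertex-connected, and hence a brick. -/
/-- A multigraph on vertex type `V` with edge type `E`: each edge has a pair of endpoints. -/
structure Multigraph (V E : Type) where
  ends : E → Sym2 V

namespace Multigraph

variable {V E : Type}

/-- No loops: no edge has equal endpoints. -/
def Loopless (G : Multigraph V E) : Prop := ∀ e, ¬ (G.ends e).IsDiag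

/-- The degree of a vertex: the number of edges incident with it. -/
noncomputable def degree (G : Multigraph V E) (v : V) : ℕ := Nat.card {e | v ∈ G.ends e}

/-- The edge cut `∂(X)`: edges with exactly one end in `X`. -/
def cut (G : Multigraph V E) (X : Set V) : Set E :=
  {e | ∃ u ∈ X, ∃ w ∉ X, G.ends e = s(u, w)}

/-- The underlying simple graph. -/
def toSimple (G : Multigraph V E) : SimpleGraph V where
  Adj u w := u ≠ w ∧ ∃ e, G.ends e = s(u, w)
  symm := by
    constructor
    rintro u w ⟨h, e, he⟩
    exact ⟨h.symm, e, by rw [he, Sym2.eq_swap]⟩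
  loopless := by constructor; rintro u ⟨h, _⟩; exact h rfl

/-- Connectivity of a multigraph. -/
def Connected (G : Multigraph V E) : Prop := G.toSimple.Connected

/-- `M` is a perfect matching on the vertex set `A`: every edge of `M` has both ends
in `A` and every vertex of `A` is covered by exactly one edge of `M`. -/
def IsPerfectMatchingOn (G : Multigraph V E) (A : Set V) (M : Set E) : Prop :=
  (∀ e ∈ M, ∀ v ∈ G.ends e, v ∈ A) ∧ ∀ v ∈ A, ∃! e, e ∈ M ∧ v ∈ G.ends e

/-- A perfect matching of `G`. -/
def IsPerfectMatching (G : Multigraph V E) (M : Set E) : Prop :=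
  G.IsPerfectMatchingOn Set.univ M

/-- `θ(G−S)`: the number of odd components of `G − S`. -/
noncomputable def theta (G : Multigraph V E) (S : Set V) : ℕ :=
  Nat.card {c : (G.toSimple.induce Sᶜ).ConnectedComponent // Odd (Nat.card c.supp)}

/-- A barrier: a vertex set `S` with `θ(G−S) = |S|`. -/
def IsBarrier (G : Multigraph V E) (S : Set V) : Prop := G.theta S = Nat.card S

/-- Bi-critical: deleting any two distinct vertices leaves a graph with a perfect matching. -/
def Bicritical (G : Multigraph V E) : Prop :=
  ∀ u v : V, u ≠ v → ∃ M, G.IsPerfectMatchingOn {u, v}ᶜ M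

/-- Bipartite multigraph. -/
def Bipartite (G : Multigraph V E) : Prop := G.toSimple.Colorable 2

/-- `k`-vertex-connected: deleting fewer than `k` vertices leaves a connected graph. -/
def VertexConnected (G : Multigraph V E) (k : ℕ) : Prop :=
  ∀ S : Set V, Nat.card S < k → (G.toSimple.induce Sᶜ).Connected

/-- A brick: non-bipartite, bi-critical and 3-vertex-connected. -/
def IsBrick (G : Multigraph V E) : Prop :=
  ¬ G.Bipartite ∧ G.Bicritical ∧ G.VertexConnected 3

/-- A proper edge coloring with `k` colors exists. -/
def EdgeColorable (G : Multigraph V E) (k : ℕ) : Prop :=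
  ∃ c : E → Fin k, ∀ e f, e ≠ f → (∃ v, v ∈ G.ends e ∧ v ∈ G.ends f) → c e ≠ c f

/-- A non-trivial odd vertex set: odd cardinality, different from `1` and `|V|−1`. -/
def NontrivialOdd (_G : Multigraph V E) (X : Set V) : Prop :=
  Odd (Nat.card X) ∧ Nat.card X ≠ 1 ∧ Nat.card X ≠ Nat.card V - 1

/-- An `r`-graph: a connected loopless `r`-regular multigraph in which every odd
vertex set has at least `r` edges leaving it. -/
def IsRGraph (G : Multigraph V E) (r : ℕ) : Prop :=
  G.Loopless ∧ G.Connected ∧ (∀ v, G.degree v = r) ∧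
    ∀ X : Set V, Odd (Nat.card X) → r ≤ Nat.card (G.cut X)

open Classical in
/-- The projection identifying the complement of `X` to a single new vertex. -/
noncomputable def proj (X : Set V) (v : V) : ↥X ⊕ Unit :=
  if h : v ∈ X then .inl ⟨v, h⟩ else .inr ()

/-- Contract the complement of `X` to a single vertex, deleting the resulting loops
(i.e. the edges with both ends outside `X`) but keeping multiplicities. -/
noncomputable def contract (G : Multigraph V E) (X : Set V) :
    Multigraph (↥X ⊕ Unit) {e // ¬ ((G.ends e).map (proj X)).IsDiag} where
  ends e := (G.ends e.1).map (proj X)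

/-- The spanning sub-multigraph with edge set `A`. -/
def restrict (G : Multigraph V E) (A : Set E) : Multigraph V ↥A where
  ends e := G.ends e.1

open Classical in
/-- Expansion: replace every vertex `v` by a cycle `C_v` of length `2k+1` in which every
edge has multiplicity `k`; the `2k+1` old edges at `v` are attached to the `2k+1` distinct
vertices of `C_v` according to the bijection `φ v`. -/
noncomputable def expand (H : Multigraph V E) (k : ℕ)
    (φ : (v : V) → {e // v ∈ H.ends e} ≃ ZMod (2 * k + 1)) :
    Multigraph (V × ZMod (2 * k + 1)) (E ⊕ V × ZMod (2 * k + 1) × Fin k) where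
  ends := fun e => match e with
    | .inl e => (H.ends e).map (fun v => (v, if h : v ∈ H.ends e then φ v ⟨e, h⟩ else 0))
    | .inr (v, i, _) => s((v, i), (v, i + 1))

end Multigraph


section BrickAux

namespace Multigraph

variable {V E : Type}

/-- Auxiliary: edges between two sets. -/
def between (G : Multigraph V E) (P Q : Set V) : Set E :=
  {e | ∃ p ∈ P, ∃ q ∈ Q, G.ends e = s(p, q)}

lemma between_comm (G : Multigraph V E) (P Q : Set V) : G.between P Q = G.between Q P := by
  ext e
  constructor <;>
  · rintro ⟨p, hp, q, hq, h⟩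
    exact ⟨q, hq, p, hp, by rw [h, Sym2.eq_swap]⟩

lemma even_aux [Fintype V] [Fintype E] (G : Multigraph V E) (hl : G.Loopless) :
    ∀ n (A : Set V) (M : Set E), A.ncard = n → G.IsPerfectMatchingOn A M → Even n := by
  intro n
  induction n using Nat.strong_induction_on with
  | _ n ih =>
    intro A M hn hM
    obtain ⟨hM1, hM2⟩ := hM
    rcases Set.eq_empty_or_nonempty A with rfl | ⟨a, ha⟩
    · subst hn; simp
    · obtain ⟨e, ⟨heM, hae⟩, huniq⟩ := hM2 a ha
      obtain ⟨b, hb⟩ := Sym2.mem_iff_exists.mp hae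
      have hba : b ≠ a := by
        intro h
        exact hl e (by rw [hb, h]; exact Sym2.mk_isDiag_iff.mpr rfl)
      have hbA : b ∈ A := hM1 e heM b (by rw [hb]; exact Sym2.mem_mk_right a b)
      have hsub : ({a, b} : Set V) ⊆ A := by
        rintro z (rfl | rfl)
        exacts [ha, hbA]
      have hpair : ({a, b} : Set V).ncard = 2 := Set.ncard_pair (Ne.symm hba)
      have h2n : 2 ≤ n := by
        have := Set.ncard_le_ncard hsub (Set.toFinite A)
        omega
      have hcard : (A \ {a, b}).ncard = n - 2 := by
        rw [Set.ncard_diff hsub, hpair, hn]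
      have hM' : G.IsPerfectMatchingOn (A \ {a, b}) (M \ {e}) := by
        constructor
        · rintro f ⟨hfM, hfe⟩ w hw
          refine ⟨hM1 f hfM w hw, ?_⟩
          rintro (rfl | rfl)
          · exact hfe (huniq f ⟨hfM, hw⟩)
          · obtain ⟨eb, -, hub⟩ := hM2 w hbA
            have h1 : f = eb := hub f ⟨hfM, hw⟩
            have h2 : e = eb := hub e ⟨heM, by rw [hb]; exact Sym2.mem_mk_right a w⟩
            exact hfe (h1.trans h2.symm)
        · rintro w ⟨hwA, hwab⟩
          obtain ⟨f, ⟨hfM, hfw⟩, hu⟩ := hM2 w hwA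
          have hfe : f ≠ e := by
            rintro rfl
            rw [hb, Sym2.mem_iff] at hfw
            exact hwab hfw
          exact ⟨f, ⟨⟨hfM, hfe⟩, hfw⟩, fun g ⟨⟨hgM, _⟩, hgw⟩ => hu g ⟨hgM, hgw⟩⟩
      have := ih (n - 2) (by omega) _ _ hcard hM'
      rw [Nat.even_iff] at this ⊢
      omega

lemma even_ncard_of_pm [Fintype V] [Fintype E] (G : Multigraph V E) (hl : G.Loopless)
    {A : Set V} {M : Set E} (h : G.IsPerfectMatchingOn A M) : Even A.ncard :=
  G.even_aux hl A.ncard A M rfl h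

lemma exists_adj_crossing {W : Type} (Γ : SimpleGraph W) {A : Set W} {x y : W}
    (hx : x ∈ A) (hy : y ∉ A) (h : Γ.Reachable x y) : ∃ a ∈ A, ∃ b ∉ A, Γ.Adj a b := by
  obtain ⟨p⟩ := h
  obtain ⟨d, _, h1, h2⟩ := p.exists_boundary_dart A hx hy
  exact ⟨d.fst, h1, d.snd, h2, d.adj⟩

lemma exists_separation (G : Multigraph V E) {S : Set V}
    {x y : ↥(Sᶜ)} (hxy : ¬ (G.toSimple.induce Sᶜ).Reachable x y) :
    ∃ X Y : Set V, (x : V) ∈ X ∧ (y : V) ∈ Y ∧ Disjoint X Y ∧ X ∪ Y = Sᶜ ∧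
      G.between X Y = ∅ := by
  classical
  refine ⟨Subtype.val '' {z : ↥(Sᶜ) | (G.toSimple.induce Sᶜ).Reachable x z},
    Sᶜ \ Subtype.val '' {z : ↥(Sᶜ) | (G.toSimple.induce Sᶜ).Reachable x z},
    ⟨x, SimpleGraph.Reachable.refl x, rfl⟩, ⟨y.2, ?_⟩, ?_, ?_, ?_⟩
  · rintro ⟨z, hz, hzy⟩
    exact hxy (by rwa [Subtype.val_injective hzy] at hz)
  · exact Set.disjoint_left.mpr fun a haX haY => haY.2 haX
  · exact Set.union_diff_cancel (by rintro _ ⟨z, _, rfl⟩; exact z.2)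
  · rw [Set.eq_empty_iff_forall_notMem]
    rintro e ⟨p, hp, q, hq, h⟩
    apply hq.2
    obtain ⟨z, hz, rfl⟩ := hp
    have hadj : (G.toSimple.induce Sᶜ).Adj z ⟨q, hq.1⟩ := by
      refine ⟨?_, e, h⟩
      intro hzq
      have hzq' : (z : V) = q := hzq
      exact hq.2 (hzq' ▸ ⟨z, hz, rfl⟩)
    exact ⟨⟨q, hq.1⟩, hz.trans hadj.reachable, rfl⟩

end Multigraph

end BrickAux

namespace Multigraph

variable {V E : Type}

lemma case2_count [Fintype V] [Fintype E] (G : Multigraph V E) {r : ℕ}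
    (hl : G.Loopless) (hdeg : ∀ v, G.degree v = r)
    {X Y : Set V} {u v : V} (huv : u ≠ v)
    (huX : u ∉ X) (hvX : v ∉ X) (hvY : v ∉ Y)
    (hpart : ∀ z, z ∈ X ∨ z ∈ Y ∨ z = u ∨ z = v)
    (hXY : G.between X Y = ∅) :
    Nat.card (G.cut (X ∪ {u})) + (G.between X {u}).ncard
      = r + (G.between X {v}).ncard := by
  classical
  set I : Set E := {e | u ∈ G.ends e} with hI
  have hBI : G.between X {u} ⊆ I := by
    rintro e ⟨p, hp, q, rfl, h⟩
    exact Set.mem_setOf.mpr (by rw [h]; exact Sym2.mem_mk_right p q)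
  have hid : G.cut (X ∪ {u}) = (I \ G.between X {u}) ∪ G.between X {v} := by
    ext e
    constructor
    · rintro ⟨p, hp, q, hq, hends⟩
      rcases hp with hp | rfl
      · rcases hpart q with hqX | hqY | rfl | rfl
        · exact absurd (Or.inl hqX) hq
        · have : e ∈ G.between X Y := ⟨p, hp, q, hqY, hends⟩
          rw [hXY] at this
          exact this.elim
        · exact absurd (Or.inr rfl) hq
        · exact Or.inr ⟨p, hp, _, rfl, hends⟩
      · refine Or.inl ⟨by rw [Set.mem_setOf, hends]; exact Sym2.mem_mk_left _ _, ?_⟩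
        rintro ⟨p', hp', q', rfl, h'⟩
        rw [hends, Sym2.eq_iff] at h'
        rcases h' with ⟨h1, h2⟩ | ⟨h1, h2⟩
        · exact huX (h1 ▸ hp')
        · exact hq (Or.inl (h2 ▸ hp'))
    · rintro (⟨huE, hnB⟩ | ⟨p, hp, q, rfl, h⟩)
      · obtain ⟨q, hq⟩ := Sym2.mem_iff_exists.mp huE
        have hqu : q ≠ u := by
          rintro rfl
          exact hl e (by rw [hq]; exact Sym2.mk_isDiag_iff.mpr rfl)
        have hqX : q ∉ X := by
          intro hqX
          exact hnB ⟨q, hqX, u, rfl, by rw [hq, Sym2.eq_swap]⟩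
        exact ⟨u, Or.inr rfl, q, by rintro (h | h); exacts [hqX h, hqu h], hq⟩
      · exact ⟨p, Or.inl hp, _, by rintro (h | h); exacts [hvX h, huv h.symm], h⟩
  have hdisj : Disjoint (I \ G.between X {u}) (G.between X {v}) := by
    rw [Set.disjoint_right]
    rintro e ⟨p, hp, q, rfl, h⟩ ⟨huE, -⟩
    rw [Set.mem_setOf, h, Sym2.mem_iff] at huE
    rcases huE with rfl | rfl
    · exact huX hp
    · exact huv rfl
  have hIr : I.ncard = r := by
    rw [← Nat.card_coe_set_eq]
    exact hdeg u
  have har : (G.between X {u}).ncard ≤ r := hIr ▸ Set.ncard_le_ncard hBI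
  have hcard : Nat.card (G.cut (X ∪ {u}))
      = (r - (G.between X {u}).ncard) + (G.between X {v}).ncard := by
    rw [Nat.card_coe_set_eq, hid, Set.ncard_union_eq hdisj, Set.ncard_diff hBI, hIr]
  omega

lemma case1_count [Fintype V] [Fintype E] (G : Multigraph V E) {r : ℕ} (hr : 3 ≤ r)
    (hl : G.Loopless) (hconn : G.toSimple.Connected) (hdeg : ∀ v, G.degree v = r)
    (hcut : ∀ Z : Set V, Odd (Nat.card Z) → r ≤ Nat.card (G.cut Z))
    {W W' : Set V} {u : V} (hW : W.Nonempty) (hW' : W'.Nonempty)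
    (hpart : ∀ z, z ∈ W ∨ z ∈ W' ∨ z = u) (huW : u ∉ W) (huW' : u ∉ W')
    (hdisj : Disjoint W W') (hWW' : G.between W W' = ∅) (hodd : Odd W.ncard) : False := by
  classical
  have hsub : G.cut W ⊆ G.between W {u} := by
    rintro e ⟨p, hp, q, hq, h⟩
    rcases hpart q with hqW | hqW' | rfl
    · exact absurd hqW hq
    · have : e ∈ G.between W W' := ⟨p, hp, q, hqW', h⟩
      rw [hWW'] at this
      exact this.elim
    · exact ⟨p, hp, q, rfl, h⟩
  have hne : (G.between W' {u}).Nonempty := by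
    obtain ⟨w', hw'⟩ := hW'
    obtain ⟨w, hw⟩ := hW
    obtain ⟨a, ha, b, hb, hadj⟩ := exists_adj_crossing G.toSimple hw'
      (fun hwW' => hdisj.ne_of_mem hw hwW' rfl) (hconn.preconnected w' w)
    obtain ⟨hab, e, he⟩ := hadj
    rcases hpart b with hbW | hbW' | rfl
    · have : e ∈ G.between W W' := ⟨b, hbW, a, ha, by rw [he, Sym2.eq_swap]⟩
      rw [hWW'] at this
      exact this.elim
    · exact absurd hbW' hb
    · exact ⟨e, a, ha, b, rfl, he⟩
  have hdisjB : Disjoint (G.between W {u}) (G.between W' {u}) := by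
    rw [Set.disjoint_left]
    rintro e ⟨p, hp, q, rfl, h⟩ ⟨p', hp', q', rfl, h'⟩
    rw [h, Sym2.eq_iff] at h'
    rcases h' with ⟨h1, h2⟩ | ⟨h1, h2⟩
    · exact hdisj.ne_of_mem hp (h1 ▸ hp') rfl
    · exact huW (h1 ▸ hp)
  have hsubI : G.between W {u} ∪ G.between W' {u} ⊆ {e | u ∈ G.ends e} := by
    rintro e (⟨p, hp, q, rfl, h⟩ | ⟨p, hp, q, rfl, h⟩) <;>
      exact Set.mem_setOf.mpr (by rw [h]; exact Sym2.mem_mk_right p q)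
  have hIr : ({e | u ∈ G.ends e} : Set E).ncard = r := by
    rw [← Nat.card_coe_set_eq]; exact hdeg u
  have h1 : (G.between W {u}).ncard + (G.between W' {u}).ncard ≤ r := by
    rw [← Set.ncard_union_eq hdisjB, ← hIr]
    exact Set.ncard_le_ncard hsubI
  have h2 : 1 ≤ (G.between W' {u}).ncard := (Set.ncard_pos (Set.toFinite _)).mpr hne
  have h3 : Nat.card (G.cut W) ≤ (G.between W {u}).ncard := by
    rw [Nat.card_coe_set_eq]
    exact Set.ncard_le_ncard hsub
  have h4 : r ≤ Nat.card (G.cut W) := hcut W (by rw [Nat.card_coe_set_eq]; exact hodd)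
  omega

end Multigraph

/-- A bi-critical non-bipartite r-graph (r ≥ 3) with no non-trivial odd set
X with |∂(X)| = r is 3-vertex-connected, and hence a brick. -/
theorem brick_theorem {V E : Type} [Fintype V] [Fintype E]
    (G : Multigraph V E) (r : ℕ) (hr : 3 ≤ r) (hG : G.IsRGraph r)
    (hbi : G.Bicritical) (hnb : ¬ G.Bipartite)
    (hno : ¬ ∃ X : Set V, G.NontrivialOdd X ∧ Nat.card (G.cut X) = r) :
    G.VertexConnected 3 ∧ G.IsBrick := by
  classical
  obtain ⟨hl, hconn, hdeg, hcutodd⟩ := hG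
  have hconn' : G.toSimple.Connected := hconn
  have hne : Nonempty V := hconn'.nonempty
  have h2 : ∃ a b : V, a ≠ b := by
    by_contra h
    push_neg at h
    have hdiag : ∀ z : Sym2 V, z.IsDiag := fun z =>
      Sym2.ind (fun a b => Sym2.mk_isDiag_iff.mpr (h a b)) z
    have hEe : IsEmpty E := ⟨fun e => hl e (hdiag _)⟩
    obtain ⟨w⟩ := hne
    have hd0 : G.degree w = 0 := by
      have : IsEmpty {e | w ∈ G.ends e} := ⟨fun x => hEe.false x.1⟩
      exact Nat.card_of_isEmpty
    rw [hdeg w] at hd0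
    omega
  obtain ⟨u0, v0, hne0⟩ := h2
  obtain ⟨M0, hM0⟩ := hbi u0 v0 hne0
  have hevenc : Even (({u0, v0}ᶜ : Set V).ncard) := G.even_ncard_of_pm hl hM0
  have hsum0 : ({u0, v0} : Set V).ncard + ({u0, v0}ᶜ : Set V).ncard = Nat.card V :=
    Set.ncard_add_ncard_compl _
  have hp0 : ({u0, v0} : Set V).ncard = 2 := Set.ncard_pair hne0
  have hVeven : Even (Nat.card V) := by
    rw [Nat.even_iff] at hevenc ⊢
    omega
  have hV2 : Nat.card V ≠ 2 := by
    intro h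
    apply hnb
    have hc : Fintype.card V = 2 := by rw [← Nat.card_eq_fintype_card]; exact h
    exact ⟨SimpleGraph.Coloring.mk (fun v => (Fintype.equivFinOfCardEq hc) v)
      (fun {a b} hab h' => hab.ne ((Fintype.equivFinOfCardEq hc).injective h'))⟩
  have hV2' : 2 ≤ Nat.card V := by
    rw [Nat.card_eq_fintype_card]
    exact Fintype.one_lt_card_iff_nontrivial.mpr ⟨u0, v0, hne0⟩
  have hV4 : 4 ≤ Nat.card V := by
    rw [Nat.even_iff] at hVeven
    omega
  have key : G.VertexConnected 3 := by
    intro S hS'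
    rw [Nat.card_coe_set_eq] at hS'
    by_contra hdisc
    have hsumS : S.ncard + Sᶜ.ncard = Nat.card V := Set.ncard_add_ncard_compl S
    have hScne : (Sᶜ : Set V).Nonempty := (Set.ncard_pos (Set.toFinite _)).mp (by omega)
    obtain ⟨x, y, hxy⟩ : ∃ x y : ↥(Sᶜ), ¬ (G.toSimple.induce Sᶜ).Reachable x y := by
      by_contra hh
      push_neg at hh
      haveI := hScne.to_subtype
      exact hdisc ⟨fun a b => hh a b⟩
    obtain ⟨X, Y, hxX, hyY, hdisjXY, hunion, hbXY⟩ := G.exists_separation hxy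
    have hXS : X ⊆ Sᶜ := hunion ▸ Set.subset_union_left
    have hYS : Y ⊆ Sᶜ := hunion ▸ Set.subset_union_right
    have hpart : ∀ z, z ∈ X ∨ z ∈ Y ∨ z ∈ S := by
      intro z
      by_cases hzS : z ∈ S
      · exact Or.inr (Or.inr hzS)
      · have : z ∈ X ∪ Y := hunion ▸ hzS
        rcases this with h | h
        exacts [Or.inl h, Or.inr (Or.inl h)]
    have hXY : X.ncard + Y.ncard = Sᶜ.ncard := by
      rw [← Set.ncard_union_eq hdisjXY, hunion]
    have hScases : S.ncard = 0 ∨ S.ncard = 1 ∨ S.ncard = 2 := by omega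
    rcases hScases with h0 | h1 | h2c
    · -- |S| = 0
      have hSempty : S = ∅ := (Set.ncard_eq_zero (Set.toFinite S)).mp h0
      have hyX : (y : V) ∉ X := fun h => hdisjXY.ne_of_mem h hyY rfl
      obtain ⟨a, ha, b, hb, hadj⟩ :=
        Multigraph.exists_adj_crossing G.toSimple hxX hyX (hconn'.preconnected x y)
      obtain ⟨hab, e, he⟩ := hadj
      have hbY : b ∈ Y := by
        have hbS : b ∈ Sᶜ := by rw [hSempty]; simp
        have : b ∈ X ∪ Y := hunion ▸ hbS
        rcases this with h | h
        exacts [absurd h hb, h]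
      have : e ∈ G.between X Y := ⟨a, ha, b, hbY, he⟩
      rw [hbXY] at this
      exact this.elim
    · -- |S| = 1
      obtain ⟨u, rfl⟩ := Set.ncard_eq_one.mp h1
      have hpart' : ∀ z, z ∈ X ∨ z ∈ Y ∨ z = u := by
        intro z
        rcases hpart z with h | h | h
        exacts [Or.inl h, Or.inr (Or.inl h), Or.inr (Or.inr h)]
      have huX : u ∉ X := fun h => (hXS h) rfl
      have huY : u ∉ Y := fun h => (hYS h) rfl
      have hS1 : ({u} : Set V).ncard = 1 := Set.ncard_singleton u
      have hoddXY : Odd X.ncard ∨ Odd Y.ncard := by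
        rw [Nat.odd_iff, Nat.odd_iff]
        rw [Nat.even_iff] at hVeven
        omega
      rcases hoddXY with ho | ho
      · exact G.case1_count hr hl hconn' hdeg hcutodd ⟨_, hxX⟩ ⟨_, hyY⟩ hpart' huX huY
          hdisjXY hbXY ho
      · exact G.case1_count hr hl hconn' hdeg hcutodd ⟨_, hyY⟩ ⟨_, hxX⟩
          (fun z => by
            rcases hpart' z with h | h | h
            exacts [Or.inr (Or.inl h), Or.inl h, Or.inr (Or.inr h)])
          huY huX hdisjXY.symm ((G.between_comm Y X).trans hbXY) ho
    · -- |S| = 2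
      obtain ⟨u, v, huv, rfl⟩ := Set.ncard_eq_two.mp h2c
      have huX : u ∉ X := fun h => (hXS h) (Or.inl rfl)
      have hvX : v ∉ X := fun h => (hXS h) (Or.inr rfl)
      have huY : u ∉ Y := fun h => (hYS h) (Or.inl rfl)
      have hvY : v ∉ Y := fun h => (hYS h) (Or.inr rfl)
      have hYeq : ({u, v} : Set V)ᶜ \ X = Y := by
        ext z
        constructor
        · rintro ⟨hzS, hzX⟩
          have : z ∈ X ∪ Y := hunion ▸ hzS
          rcases this with h | h
          exacts [absurd h hzX, h]
        · intro hzY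
          exact ⟨hYS hzY, fun hzX => hdisjXY.ne_of_mem hzX hzY rfl⟩
      have hXeq : ({u, v} : Set V)ᶜ \ Y = X := by
        ext z
        constructor
        · rintro ⟨hzS, hzY⟩
          have : z ∈ X ∪ Y := hunion ▸ hzS
          rcases this with h | h
          exacts [h, absurd h hzY]
        · intro hzX
          exact ⟨hXS hzX, fun hzY => hdisjXY.ne_of_mem hzX hzY rfl⟩
      obtain ⟨M, hM1, hM2⟩ := hbi u v huv
      have hmatch : ∀ W : Set V, W ⊆ ({u, v} : Set V)ᶜ →
          G.between W (({u, v} : Set V)ᶜ \ W) = ∅ → Even W.ncard := by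
        intro W hWS hbW
        apply G.even_ncard_of_pm hl (M := {e | e ∈ M ∧ ∃ p ∈ W, p ∈ G.ends e})
        constructor
        · rintro e ⟨heM, p, hpW, hpe⟩ w hw
          obtain ⟨q, hq⟩ := Sym2.mem_iff_exists.mp hpe
          have hqW : q ∈ W := by
            by_cases hqp : q = p
            · exact hqp ▸ hpW
            · have hqS : q ∈ ({u, v} : Set V)ᶜ :=
                hM1 e heM q (by rw [hq]; exact Sym2.mem_mk_right p q)
              by_contra hqW
              have : e ∈ G.between W (({u, v} : Set V)ᶜ \ W) := ⟨p, hpW, q, ⟨hqS, hqW⟩, hq⟩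
              rw [hbW] at this
              exact this.elim
          rw [hq, Sym2.mem_iff] at hw
          rcases hw with rfl | rfl
          exacts [hpW, hqW]
        · intro p hp
          obtain ⟨e, ⟨heM, hpe⟩, hu⟩ := hM2 p (hWS hp)
          exact ⟨e, ⟨⟨heM, p, hp, hpe⟩, hpe⟩, fun f hf => hu f ⟨hf.1.1, hf.2⟩⟩
      have hEX : Even X.ncard := hmatch X hXS (by rw [hYeq]; exact hbXY)
      have hEY : Even Y.ncard := hmatch Y hYS (by rw [hXeq]; exact (G.between_comm Y X).trans hbXY)
      have hpart2 : ∀ z, z ∈ X ∨ z ∈ Y ∨ z = u ∨ z = v := by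
        intro z
        rcases hpart z with h | h | h
        · exact Or.inl h
        · exact Or.inr (Or.inl h)
        · rcases h with h | h
          exacts [Or.inr (Or.inr (Or.inl h)), Or.inr (Or.inr (Or.inr h))]
      have hpart2' : ∀ z, z ∈ X ∨ z ∈ Y ∨ z = v ∨ z = u := by
        intro z
        rcases hpart2 z with h | h | h | h
        exacts [Or.inl h, Or.inr (Or.inl h), Or.inr (Or.inr (Or.inr h)),
          Or.inr (Or.inr (Or.inl h))]
      have hc1 := G.case2_count hl hdeg huv huX hvX hvY hpart2 hbXY
      have hc2 := G.case2_count hl hdeg huv.symm hvX huX huY hpart2' hbXY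
      have hnXu : (X ∪ {u}).ncard = X.ncard + 1 := by
        rw [Set.union_singleton, Set.ncard_insert_of_notMem huX]
      have hnXv : (X ∪ {v}).ncard = X.ncard + 1 := by
        rw [Set.union_singleton, Set.ncard_insert_of_notMem hvX]
      have hoddXu : Odd (Nat.card ↥(X ∪ {u})) := by
        rw [Nat.card_coe_set_eq, hnXu, Nat.odd_iff]
        rw [Nat.even_iff] at hEX
        omega
      have hoddXv : Odd (Nat.card ↥(X ∪ {v})) := by
        rw [Nat.card_coe_set_eq, hnXv, Nat.odd_iff]
        rw [Nat.even_iff] at hEX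
        omega
      have hb1 : r ≤ Nat.card (G.cut (X ∪ {u})) := hcutodd _ hoddXu
      have hb2 : r ≤ Nat.card (G.cut (X ∪ {v})) := hcutodd _ hoddXv
      have hcr : Nat.card (G.cut (X ∪ {u})) = r := by omega
      have hX1 : 0 < X.ncard := (Set.ncard_pos (Set.toFinite _)).mpr ⟨_, hxX⟩
      have hY1 : 0 < Y.ncard := (Set.ncard_pos (Set.toFinite _)).mpr ⟨_, hyY⟩
      have hX2 : 2 ≤ X.ncard := by
        rw [Nat.even_iff] at hEX
        omega
      have hY2 : 2 ≤ Y.ncard := by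
        rw [Nat.even_iff] at hEY
        omega
      have hpuv : ({u, v} : Set V).ncard = 2 := Set.ncard_pair huv
      apply hno
      refine ⟨X ∪ {u}, ⟨hoddXu, ?_, ?_⟩, hcr⟩
      · rw [Nat.card_coe_set_eq, hnXu]
        omega
      · rw [Nat.card_coe_set_eq, hnXu]
        omega
  exact ⟨key, hnb, hbi, key⟩
end

section
/- Let G be an r-graph and X a non-trivial odd vertex set with |∂(X)| = r. Let G₁ and G₂ be obtained from G by contracting V(G)∖X and X to single vertices, respectively. Then G₁ and G₂ are r-graphs with fewer vertices than G. -/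
namespace Multigraph

variable {V E : Type}

lemma proj_mem {X : Set V} {v : V} (h : v ∈ X) : proj X v = Sum.inl ⟨v, h⟩ := dif_pos h

lemma proj_not_mem {X : Set V} {v : V} (h : v ∉ X) : proj X v = Sum.inr () := dif_neg h

lemma proj_preimage_inl (X : Set V) (v : V) (hv : v ∈ X) :
    proj X ⁻¹' {Sum.inl ⟨v, hv⟩} = {v} := by
  ext a
  simp only [Set.mem_preimage, Set.mem_singleton_iff]
  by_cases h : a ∈ X
  · rw [proj_mem h]
    simp [Subtype.ext_iff]
  · rw [proj_not_mem h]
    simp only [reduceCtorEq, false_iff]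
    rintro rfl; exact h hv

lemma proj_preimage_inr (X : Set V) :
    proj X ⁻¹' {Sum.inr ()} = Xᶜ := by
  ext a
  by_cases h : a ∈ X
  · simp [Set.mem_preimage, proj_mem h, h]
  · simp [Set.mem_preimage, proj_not_mem h, h]

lemma map_cut_iff {W : Type} (p : V → W) (Y : Set W) (z : Sym2 V) :
    (∃ u ∈ Y, ∃ w ∉ Y, z.map p = s(u, w)) ↔
      ∃ u ∈ p ⁻¹' Y, ∃ w ∉ p ⁻¹' Y, z = s(u, w) := by
  induction z using Sym2.ind with
  | _ a b =>
    rw [Sym2.map_pair_eq]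
    constructor
    · rintro ⟨u, hu, w, hw, h⟩
      rw [Sym2.eq_iff] at h
      rcases h with ⟨h1, h2⟩ | ⟨h1, h2⟩
      · exact ⟨a, by simp [Set.mem_preimage, h1, hu], b,
          by simp [Set.mem_preimage, h2, hw], rfl⟩
      · exact ⟨b, by simp [Set.mem_preimage, h2, hu], a,
          by simp [Set.mem_preimage, h1, hw], Sym2.eq_swap⟩
    · rintro ⟨u, hu, w, hw, h⟩
      simp only [Set.mem_preimage] at hu hw
      rw [Sym2.eq_iff] at h
      rcases h with ⟨h1, h2⟩ | ⟨h1, h2⟩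
      · subst h1; subst h2; exact ⟨p a, hu, p b, hw, rfl⟩
      · subst h1; subst h2; exact ⟨p b, hu, p a, hw, Sym2.eq_swap⟩

/-- Set-level: membership in a cut of a contraction. -/
lemma mem_cut_contract {G : Multigraph V E} {X : Set V} {Y : Set (↥X ⊕ Unit)}
    {e : {e // ¬ ((G.ends e).map (proj X)).IsDiag}} :
    e ∈ (G.contract X).cut Y ↔ e.1 ∈ G.cut (proj X ⁻¹' Y) :=
  map_cut_iff (proj X) Y (G.ends e.1)

lemma card_cut_contract (G : Multigraph V E) (X : Set V) (Y : Set (↥X ⊕ Unit)) :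
    Nat.card ((G.contract X).cut Y) = Nat.card (G.cut (proj X ⁻¹' Y)) := by
  apply Nat.card_eq_of_bijective
    (fun e => (⟨e.1.1, mem_cut_contract.1 e.2⟩ : G.cut (proj X ⁻¹' Y)))
  constructor
  · rintro ⟨⟨e, he⟩, h1⟩ ⟨⟨f, hf⟩, h2⟩ h
    simp only [Subtype.mk.injEq] at h
    simp [h]
  · rintro ⟨e, he⟩
    have hnd : ¬ ((G.ends e).map (proj X)).IsDiag := by
      obtain ⟨u, hu, w, hw, h⟩ := he
      simp only [Set.mem_preimage] at hu hw
      rw [h, Sym2.map_pair_eq, Sym2.mk_isDiag_iff]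
      intro hc
      rw [hc] at hu
      exact hw hu
    exact ⟨⟨⟨e, hnd⟩, mem_cut_contract.2 he⟩, rfl⟩

lemma cut_compl (G : Multigraph V E) (X : Set V) : G.cut Xᶜ = G.cut X := by
  ext e
  constructor
  · rintro ⟨u, hu, w, hw, h⟩
    exact ⟨w, by simpa using hw, u, hu, h.trans Sym2.eq_swap⟩
  · rintro ⟨u, hu, w, hw, h⟩
    exact ⟨w, hw, u, by simpa using hu, h.trans Sym2.eq_swap⟩

lemma degree_eq_card_cut_singleton {G : Multigraph V E} (hL : G.Loopless) (v : V) :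
    G.degree v = Nat.card (G.cut {v}) := by
  have : {e | v ∈ G.ends e} = G.cut {v} := by
    ext e
    constructor
    · intro he
      obtain ⟨b, hb⟩ := Sym2.mem_iff_exists.1 he
      refine ⟨v, rfl, b, ?_, hb⟩
      intro hc
      apply hL e
      rw [hb, Sym2.mk_isDiag_iff]
      exact (Set.mem_singleton_iff.1 hc).symm
    · rintro ⟨u, hu, w, _, h⟩
      rw [Set.mem_singleton_iff] at hu
      subst hu
      rw [Set.mem_setOf_eq, h]
      exact Sym2.mem_mk_left u w
  rw [degree, this]

lemma reachable_proj {G : Multigraph V E} (X : Set V) {a b : V}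
    (h : G.toSimple.Reachable a b) :
    (G.contract X).toSimple.Reachable (proj X a) (proj X b) := by
  obtain ⟨w⟩ := h
  induction w with
  | nil => exact SimpleGraph.Reachable.refl _
  | cons hadj p ih =>
    rename_i u c d
    obtain ⟨hne, e, he⟩ := hadj
    by_cases hp : proj X u = proj X c
    · rw [hp]; exact ih
    · have hnd : ¬ ((G.ends e).map (proj X)).IsDiag := by
        rw [he, Sym2.map_pair_eq, Sym2.mk_isDiag_iff]; exact hp
      refine (SimpleGraph.Adj.reachable ?_).trans ih
      show proj X u ≠ proj X c ∧ ∃ e', (G.contract X).ends e' = s(proj X u, proj X c)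
      refine ⟨hp, ⟨e, hnd⟩, ?_⟩
      show (G.ends e).map (proj X) = _
      rw [he, Sym2.map_pair_eq]

lemma card_preimage_of_not_mem {X : Set V} {Y : Set (↥X ⊕ Unit)}
    (h : Sum.inr () ∉ Y) : Nat.card (proj X ⁻¹' Y) = Nat.card Y := by
  apply Nat.card_eq_of_bijective (fun v => (⟨proj X v.1, v.2⟩ : Y))
  constructor
  · rintro ⟨v, hv⟩ ⟨w, hw⟩ hvw
    simp only [Set.mem_preimage] at hv hw
    simp only [Subtype.mk.injEq] at hvw ⊢
    by_cases h1 : v ∈ X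
    · by_cases h2 : w ∈ X
      · rw [proj_mem h1, proj_mem h2] at hvw
        simpa [Subtype.ext_iff] using hvw
      · rw [proj_not_mem h2] at hw
        exact absurd hw h
    · rw [proj_not_mem h1] at hv
      exact absurd hv h
  · rintro ⟨y, hy⟩
    match y with
    | .inr () => exact absurd hy h
    | .inl ⟨v, hv⟩ =>
      refine ⟨⟨v, ?_⟩, ?_⟩ <;> simp [Set.mem_preimage, proj_mem hv, hy]

end Multigraph

namespace Multigraph

variable {V E : Type}

lemma one_le_r [Fintype V] [Fintype E] (G : Multigraph V E) (r : ℕ)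
    (hG : G.IsRGraph r) (h2 : 1 < Nat.card V) : 1 ≤ r := by
  have hnt : Nontrivial V := by
    rw [Nat.card_eq_fintype_card] at h2
    exact Fintype.one_lt_card_iff_nontrivial.mp h2
  have hne : Nonempty V := inferInstance
  set v := Classical.arbitrary V
  obtain ⟨y, hy⟩ := exists_ne v
  obtain ⟨w⟩ := hG.2.1.preconnected y v
  cases w with
  | nil => exact absurd rfl hy
  | cons h p =>
    obtain ⟨_, e, he⟩ := h
    have hpos : 0 < G.degree y := by
      have : Nonempty {e' | y ∈ G.ends e'} :=
        ⟨⟨e, by rw [Set.mem_setOf_eq, he]; exact Sym2.mem_mk_left _ _⟩⟩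
      exact Nat.card_pos
    rw [hG.2.2.1 y] at hpos
    exact hpos

lemma card_sum_compl [Finite V] (X : Set V) :
    Nat.card ↥X + Nat.card ↥(Xᶜ) = Nat.card V := by
  rw [Nat.card_coe_set_eq, Nat.card_coe_set_eq]
  exact Set.ncard_add_ncard_compl X

lemma card_X_le [Fintype V] (X : Set V) : Nat.card ↥X ≤ Nat.card V :=
  Nat.card_le_card_of_injective _ Subtype.val_injective

lemma three_le_card [Fintype V] {G : Multigraph V E} {X : Set V}
    (hX : G.NontrivialOdd X) : 3 ≤ Nat.card ↥X := by
  obtain ⟨h1, h2, _⟩ := hX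
  rw [Nat.odd_iff] at h1
  omega

lemma even_card_V [Fintype V] [Fintype E] (G : Multigraph V E) (r : ℕ)
    (hG : G.IsRGraph r) (X : Set V) (hX : G.NontrivialOdd X) :
    Even (Nat.card V) := by
  have h3 := three_le_card hX
  have hle := card_X_le X
  have hr := one_le_r G r hG (by omega)
  by_contra hodd
  rw [Nat.not_even_iff_odd] at hodd
  have hcut := hG.2.2.2 Set.univ (by rwa [Nat.card_univ])
  have hempty : G.cut Set.univ = ∅ := by
    ext e
    simp only [cut, Set.mem_univ, not_true_eq_false, Set.mem_setOf_eq,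
      Set.mem_empty_iff_false, iff_false]
    rintro ⟨u, -, w, hw, -⟩
    exact hw
  rw [hempty] at hcut
  simp at hcut
  omega

lemma nontrivialOdd_compl [Fintype V] [Fintype E] (G : Multigraph V E) (r : ℕ)
    (hG : G.IsRGraph r) (X : Set V) (hX : G.NontrivialOdd X) :
    G.NontrivialOdd Xᶜ := by
  have hsum := card_sum_compl X
  have hV := even_card_V G r hG X hX
  have h3 := three_le_card hX
  obtain ⟨h1, h2, hV1⟩ := hX
  rw [Nat.odd_iff] at h1
  rw [Nat.even_iff] at hV
  refine ⟨by rw [Nat.odd_iff]; omega, by omega, by omega⟩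

lemma contract_key [Fintype V] [Fintype E]
    (G : Multigraph V E) (r : ℕ) (hG : G.IsRGraph r)
    (X : Set V) (hX : G.NontrivialOdd X) (hcut : Nat.card (G.cut X) = r) :
    (G.contract X).IsRGraph r ∧ Nat.card (↥X ⊕ Unit) < Nat.card V := by
  have hsum := card_sum_compl X
  have hV := even_card_V G r hG X hX
  have hXc := nontrivialOdd_compl G r hG X hX
  have h3 := three_le_card hX
  have h3c := three_le_card hXc
  obtain ⟨hGL, hGc, hGd, hGcut⟩ := hG
  have hXcne : Xᶜ.Nonempty := by
    rw [Set.nonempty_iff_ne_empty]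
    intro h
    rw [h] at h3c
    simp at h3c
  have hsumcard : Nat.card (↥X ⊕ Unit) = Nat.card ↥X + 1 := by
    rw [Nat.card_sum]; simp
  have hcontL : (G.contract X).Loopless := fun e => e.2
  refine ⟨⟨hcontL, ?_, ?_, ?_⟩, by omega⟩
  · -- connected
    have hsurj : ∀ y : ↥X ⊕ Unit, ∃ v, proj X v = y := by
      rintro (⟨v, hv⟩ | u)
      · exact ⟨v, proj_mem hv⟩
      · obtain ⟨w, hw⟩ := hXcne
        exact ⟨w, proj_not_mem hw⟩
    have : Nonempty (↥X ⊕ Unit) := ⟨Sum.inr ()⟩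
    refine ⟨fun y z => ?_⟩
    obtain ⟨v, rfl⟩ := hsurj y
    obtain ⟨w, rfl⟩ := hsurj z
    exact reachable_proj X (hGc.preconnected v w)
  · -- degrees
    rintro (⟨v, hv⟩ | ⟨⟩)
    · rw [degree_eq_card_cut_singleton hcontL, card_cut_contract,
        proj_preimage_inl X v hv, ← degree_eq_card_cut_singleton hGL, hGd]
    · rw [degree_eq_card_cut_singleton hcontL, card_cut_contract,
        proj_preimage_inr, cut_compl, hcut]
  · -- odd cut condition
    intro Y hY
    rw [card_cut_contract]
    apply hGcut
    by_cases h : Sum.inr () ∈ Y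
    · have h1 : Nat.card ↥((proj X ⁻¹' Y)ᶜ) = Nat.card ↥(Yᶜ) := by
        rw [← Set.preimage_compl]
        exact card_preimage_of_not_mem (fun hc => hc h)
      have h2 := card_sum_compl (proj X ⁻¹' Y)
      have h4 : Nat.card ↥Y + Nat.card ↥(Yᶜ) = Nat.card ↥X + 1 := by
        rw [card_sum_compl Y, hsumcard]
      rw [Nat.odd_iff] at hY ⊢
      rw [Nat.even_iff] at hV
      obtain ⟨hXodd, -, -⟩ := hX
      rw [Nat.odd_iff] at hXodd
      omega
    · rwa [card_preimage_of_not_mem h]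

end Multigraph

/-- Contracting the complement of a non-trivial odd set X with |∂(X)| = r,
or X itself, yields r-graphs with fewer vertices. -/
theorem contract_rGraph {V E : Type} [Fintype V] [Fintype E]
    (G : Multigraph V E) (r : ℕ) (hG : G.IsRGraph r)
    (X : Set V) (hX : G.NontrivialOdd X) (hcut : Nat.card (G.cut X) = r) :
    (G.contract X).IsRGraph r ∧ (G.contract Xᶜ).IsRGraph r ∧
    Nat.card (↥X ⊕ Unit) < Nat.card V ∧ Nat.card (↥Xᶜ ⊕ Unit) < Nat.card V := by
  have hXc := Multigraph.nontrivialOdd_compl G r hG X hX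
  have hcutc : Nat.card (G.cut Xᶜ) = r := by rw [Multigraph.cut_compl]; exact hcut
  obtain ⟨k1, k2⟩ := Multigraph.contract_key G r hG X hX hcut
  obtain ⟨k3, k4⟩ := Multigraph.contract_key G r hG Xᶜ hXc hcutc
  exact ⟨k1, k3, k2, k4⟩
end

section
/- Let G be an r-graph, X a non-trivial odd vertex set with |∂(X)| = r, and let G₁, G₂ be obtained by contracting V(G)∖X and X respectively. If G₁ and G₂ are each (r+1)-edge-colorable, then G is (r+1)-edge-colorable. -/
section ContractAux

/-- Two injections into a finite type differ by a permutation. -/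
lemma exists_perm_comp {α β : Type*} [Fintype β] [DecidableEq β]
    (a b : α → β) (ha : Function.Injective a) (hb : Function.Injective b) :
    ∃ σ : Equiv.Perm β, ∀ x, σ (b x) = a x := by
  classical
  let e₀ : Set.range b ≃ Set.range a :=
    (Equiv.ofInjective b hb).symm.trans (Equiv.ofInjective a ha)
  have hcard : Fintype.card ((Set.range b)ᶜ : Set β)
      = Fintype.card ((Set.range a)ᶜ : Set β) := by
    rw [Fintype.card_compl_set, Fintype.card_compl_set, Fintype.card_congr e₀]
  let σp := (Equiv.Set.compl e₀).symm (Fintype.equivOfCardEq hcard)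
  refine ⟨σp.1, fun x => ?_⟩
  have h := σp.2 ⟨b x, Set.mem_range_self x⟩
  rw [h]
  simp [e₀]

open Multigraph in
lemma proj_map_isDiag_iff {V : Type} (X : Set V) {u w : V} (hne : u ≠ w) :
    (Sym2.map (proj X) s(u, w)).IsDiag ↔ u ∉ X ∧ w ∉ X := by
  classical
  by_cases hu : u ∈ X <;> by_cases hw : w ∈ X <;>
    simp [proj, hu, hw, Sym2.map_pair_eq, hne, Subtype.ext_iff]

open Multigraph in
lemma proj_mem_map {V : Type} (X : Set V) {v : V} {z : Sym2 V} (hv : v ∈ z) :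
    proj X v ∈ z.map (proj X) :=
  Sym2.mem_map.2 ⟨v, hv, rfl⟩

end ContractAux

/-- If both contractions G₁ (of V∖X) and G₂ (of X) are (r+1)-edge-colorable,
then so is G. -/
theorem contract_edgeColorable {V E : Type} [Fintype V] [Fintype E]
    (G : Multigraph V E) (r : ℕ) (hG : G.IsRGraph r)
    (X : Set V) (hX : G.NontrivialOdd X) (hcut : Nat.card (G.cut X) = r)
    (h1 : (G.contract X).EdgeColorable (r + 1))
    (h2 : (G.contract Xᶜ).EdgeColorable (r + 1)) :
    G.EdgeColorable (r + 1) := by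
  classical
  obtain ⟨hL, -, -, -⟩ := hG
  obtain ⟨c₁, hc₁⟩ := h1
  obtain ⟨c₂, hc₂⟩ := h2
  have hrep : ∀ e : E, ∃ u w, u ≠ w ∧ G.ends e = s(u, w) := by
    intro e
    have hd := hL e
    rw [← (G.ends e).out_eq, Sym2.isDiag_iff_proj_eq] at hd
    exact ⟨_, _, hd, ((G.ends e).out_eq).symm⟩
  have pair_iff : ∀ (u w : V) (p : V → Prop), (p u ∧ p w) ↔ ∀ v ∈ s(u, w), p v := by
    intro u w p
    constructor
    · rintro ⟨h1, h2⟩ v hv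
      rcases Sym2.mem_iff.1 hv with rfl | rfl <;> assumption
    · intro h
      exact ⟨h u (Sym2.mem_mk_left u w), h w (Sym2.mem_mk_right u w)⟩
  have hD1_iff : ∀ e, ((G.ends e).map (Multigraph.proj X)).IsDiag ↔
      ∀ v ∈ G.ends e, v ∉ X := by
    intro e
    obtain ⟨u, w, hne, hew⟩ := hrep e
    rw [hew, proj_map_isDiag_iff X hne]
    exact pair_iff u w (fun v => v ∉ X)
  have hD2_iff : ∀ e, ((G.ends e).map (Multigraph.proj Xᶜ)).IsDiag ↔
      ∀ v ∈ G.ends e, v ∈ X := by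
    intro e
    obtain ⟨u, w, hne, hew⟩ := hrep e
    rw [hew, proj_map_isDiag_iff Xᶜ hne, Set.notMem_compl_iff, Set.notMem_compl_iff]
    exact pair_iff u w (fun v => v ∈ X)
  have hD12 : ∀ e, ((G.ends e).map (Multigraph.proj X)).IsDiag →
      ¬ ((G.ends e).map (Multigraph.proj Xᶜ)).IsDiag := by
    intro e h1 h2
    obtain ⟨u, w, hne, hew⟩ := hrep e
    have hu : u ∈ G.ends e := by rw [hew]; exact Sym2.mem_mk_left u w
    exact (hD1_iff e).1 h1 u hu ((hD2_iff e).1 h2 u hu)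
  have hcutD1 : ∀ e ∈ G.cut X, ¬ ((G.ends e).map (Multigraph.proj X)).IsDiag := by
    rintro e ⟨u, hu, w, hw, hew⟩ h
    exact (hD1_iff e).1 h u (by rw [hew]; exact Sym2.mem_mk_left u w) hu
  have hcutD2 : ∀ e ∈ G.cut X, ¬ ((G.ends e).map (Multigraph.proj Xᶜ)).IsDiag := by
    rintro e ⟨u, hu, w, hw, hew⟩ h
    exact hw ((hD2_iff e).1 h w (by rw [hew]; exact Sym2.mem_mk_right u w))
  have hhub1 : ∀ e ∈ G.cut X, Sum.inr () ∈ (G.ends e).map (Multigraph.proj X) := by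
    rintro e ⟨u, hu, w, hw, hew⟩
    rw [hew]
    exact Sym2.mem_map.2 ⟨w, Sym2.mem_mk_right u w, by simp [Multigraph.proj, hw]⟩
  have hhub2 : ∀ e ∈ G.cut X, Sum.inr () ∈ (G.ends e).map (Multigraph.proj Xᶜ) := by
    rintro e ⟨u, hu, w, hw, hew⟩
    rw [hew]
    exact Sym2.mem_map.2 ⟨u, Sym2.mem_mk_left u w, by simp [Multigraph.proj, hu]⟩
  -- the two colorings restricted to the cut, as maps into `Fin (r+1)`
  set a : (G.cut X) → Fin (r + 1) := fun e => c₁ ⟨e.1, hcutD1 e.1 e.2⟩ with ha_def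
  set b : (G.cut X) → Fin (r + 1) := fun e => c₂ ⟨e.1, hcutD2 e.1 e.2⟩ with hb_def
  have ha : Function.Injective a := by
    intro e e' h
    by_contra hne
    exact hc₁ ⟨e.1, hcutD1 e.1 e.2⟩ ⟨e'.1, hcutD1 e'.1 e'.2⟩
      (by intro hq; injection hq with h; exact hne (Subtype.ext h))
      ⟨Sum.inr (), hhub1 e.1 e.2, hhub1 e'.1 e'.2⟩ h
  have hb : Function.Injective b := by
    intro e e' h
    by_contra hne
    exact hc₂ ⟨e.1, hcutD2 e.1 e.2⟩ ⟨e'.1, hcutD2 e'.1 e'.2⟩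
      (by intro hq; injection hq with h; exact hne (Subtype.ext h))
      ⟨Sum.inr (), hhub2 e.1 e.2, hhub2 e'.1 e'.2⟩ h
  obtain ⟨σ, hσ⟩ := exists_perm_comp a b ha hb
  -- the combined coloring
  let c : E → Fin (r + 1) := fun e =>
    if h : ((G.ends e).map (Multigraph.proj X)).IsDiag then σ (c₂ ⟨e, hD12 e h⟩)
    else c₁ ⟨e, h⟩
  have hcpos : ∀ e (h : ((G.ends e).map (Multigraph.proj X)).IsDiag),
      c e = σ (c₂ ⟨e, hD12 e h⟩) := fun e h => dif_pos h
  have hcneg : ∀ e (h : ¬ ((G.ends e).map (Multigraph.proj X)).IsDiag),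
      c e = c₁ ⟨e, h⟩ := fun e h => dif_neg h
  have key : ∀ e f : E, e ≠ f → ∀ v, v ∈ G.ends e → v ∈ G.ends f →
      ¬ ((G.ends e).map (Multigraph.proj X)).IsDiag →
      ((G.ends f).map (Multigraph.proj X)).IsDiag → c e ≠ c f := by
    intro e f hef v hve hvf he hf
    have hvX : v ∉ X := (hD1_iff f).1 hf v hvf
    have hecut : e ∈ G.cut X := by
      obtain ⟨u, w, hne, hew⟩ := hrep e
      rw [hD1_iff] at he
      push_neg at he
      obtain ⟨x, hx, hxX⟩ := he
      have hxv : x ≠ v := fun h => hvX (h ▸ hxX)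
      refine ⟨x, hxX, v, hvX, ?_⟩
      have hx' : x = u ∨ x = w := by rwa [hew, Sym2.mem_iff] at hx
      have hv' : v = u ∨ v = w := by rwa [hew, Sym2.mem_iff] at hve
      rw [hew]
      rcases hx' with rfl | rfl <;> rcases hv' with rfl | rfl
      · exact absurd rfl hxv
      · rfl
      · exact Sym2.eq_swap
      · exact absurd rfl hxv
    have hce : c e = σ (c₂ ⟨e, hcutD2 e hecut⟩) := by
      rw [hcneg e he]
      exact (hσ ⟨e, hecut⟩).symm
    rw [hce, hcpos f hf]
    intro h
    exact hc₂ ⟨e, hcutD2 e hecut⟩ ⟨f, hD12 f hf⟩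
      (fun hq => hef (congrArg Subtype.val hq))
      ⟨Multigraph.proj Xᶜ v, proj_mem_map Xᶜ hve, proj_mem_map Xᶜ hvf⟩
      (σ.injective h)
  refine ⟨c, ?_⟩
  rintro e f hef ⟨v, hve, hvf⟩
  by_cases he : ((G.ends e).map (Multigraph.proj X)).IsDiag <;>
    by_cases hf : ((G.ends f).map (Multigraph.proj X)).IsDiag
  · rw [hcpos e he, hcpos f hf]
    intro h
    exact hc₂ ⟨e, hD12 e he⟩ ⟨f, hD12 f hf⟩
      (fun hq => hef (congrArg Subtype.val hq))
      ⟨Multigraph.proj Xᶜ v, proj_mem_map Xᶜ hve, proj_mem_map Xᶜ hvf⟩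
      (σ.injective h)
  · exact (key f e hef.symm v hvf hve hf he).symm
  · exact key e f hef v hve hvf he hf
  · rw [hcneg e he, hcneg f hf]
    exact hc₁ ⟨e, he⟩ ⟨f, hf⟩ (fun hq => hef (congrArg Subtype.val hq))
      ⟨Multigraph.proj X v, proj_mem_map X hve, proj_mem_map X hvf⟩
end

section
/- If every r-graph contains 2r perfect matchings such that each edge belongs to exactly two of them, then every r-graph contains 2r perfect matchings such that any three of them have empty common intersection. -/
/-- If every r-graph has 2r perfect matchings covering each edge exactly
twice, then every r-graph has 2r perfect matchings any three of which have empty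
intersection. -/
theorem doubleCover_implies_triple_empty
    (hBF : ∀ (V E : Type) [Fintype V] [Fintype E] (G : Multigraph V E) (r : ℕ),
      G.IsRGraph r →
        ∃ F : Fin (2 * r) → Set E, (∀ i, G.IsPerfectMatching (F i)) ∧
          ∀ e : E, Nat.card {i : Fin (2 * r) | e ∈ F i} = 2) :
    ∀ (V E : Type) [Fintype V] [Fintype E] (G : Multigraph V E) (r : ℕ),
      G.IsRGraph r →
        ∃ F : Fin (2 * r) → Set E, (∀ i, G.IsPerfectMatching (F i)) ∧
          ∀ i j l : Fin (2 * r), i ≠ j → i ≠ l → j ≠ l →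
            F i ∩ F j ∩ F l = ∅ := by
  intro V E _ _ G r hG
  obtain ⟨F, hF, h2⟩ := hBF V E G r hG
  refine ⟨F, hF, ?_⟩
  intro i j l hij hil hjl
  ext e
  simp only [Set.mem_inter_iff, Set.mem_empty_iff_false, iff_false, not_and]
  rintro ⟨hi, hj⟩ hl
  have hsub : ({i, j, l} : Set (Fin (2 * r))) ⊆ {i : Fin (2 * r) | e ∈ F i} := by
    rintro x (rfl | rfl | rfl) <;> assumption
  have h3 : ({i, j, l} : Set (Fin (2 * r))).ncard = 3 := by
    rw [Set.ncard_insert_of_notMem (by simp [hij, hil]),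
      Set.ncard_insert_of_notMem (by simp [hjl]), Set.ncard_singleton]
  have hle := Set.ncard_le_ncard hsub (Set.toFinite _)
  have := h2 e
  rw [Nat.card_coe_set_eq] at this
  omega
end

section
/- If G is a matching covered graph and S is a maximal barrier, then every component of G−S is factor-critical. -/
namespace MatchAux

open scoped Classical

variable {V : Type} (H : SimpleGraph V)

/-- One step within a vertex set `X`. -/
def Stp (X : Set V) (x y : V) : Prop := x ∈ X ∧ y ∈ X ∧ H.Adj x y

/-- Reachability within a vertex set `X`. -/
def RW (X : Set V) (x y : V) : Prop :=
  x ∈ X ∧ y ∈ X ∧ Relation.ReflTransGen (Stp H X) x y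

variable {H}

lemma Stp.symm {X : Set V} {x y : V} (h : Stp H X x y) : Stp H X y x :=
  ⟨h.2.1, h.1, h.2.2.symm⟩

lemma RW.refl {X : Set V} {x : V} (hx : x ∈ X) : RW H X x x :=
  ⟨hx, hx, Relation.ReflTransGen.refl⟩

lemma RW.symm {X : Set V} {x y : V} (h : RW H X x y) : RW H X y x :=
  ⟨h.2.1, h.1, by
    haveI : Std.Symm (Stp H X) := ⟨fun _ _ hs => hs.symm⟩
    exact Relation.ReflTransGen.symmetric.symm _ _ h.2.2⟩

lemma RW.trans {X : Set V} {x y z : V} (h : RW H X x y) (h' : RW H X y z) :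
    RW H X x z := ⟨h.1, h'.2.1, h.2.2.trans h'.2.2⟩

lemma RW.mono {X X' : Set V} (hX : X ⊆ X') {x y : V} (h : RW H X x y) :
    RW H X' x y := by
  refine ⟨hX h.1, hX h.2.1, ?_⟩
  exact Relation.ReflTransGen.mono (p := Stp H X') (fun a b (hab : Stp H X a b) => (⟨hX hab.1, hX hab.2.1, hab.2.2⟩ : Stp H X' a b)) _ _ h.2.2

/-- The block (connected component within `X`) of `x`. -/
def blockOf (H : SimpleGraph V) (X : Set V) (x : V) : Set V := {y | RW H X x y}

def IsBlock (H : SimpleGraph V) (X B : Set V) : Prop := ∃ x ∈ X, B = blockOf H X x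

lemma mem_blockOf_self {X : Set V} {x : V} (hx : x ∈ X) : x ∈ blockOf H X x :=
  RW.refl hx

lemma blockOf_subset {X : Set V} {x : V} : blockOf H X x ⊆ X := fun _ hy => hy.2.1

lemma blockOf_eq_of_rw {X : Set V} {x y : V} (h : RW H X x y) :
    blockOf H X x = blockOf H X y := by
  ext z; exact ⟨fun hz => h.symm.trans hz, fun hz => h.trans hz⟩

lemma IsBlock.nonempty {X B : Set V} (h : IsBlock H X B) : B.Nonempty := by
  obtain ⟨x, hx, rfl⟩ := h; exact ⟨x, mem_blockOf_self hx⟩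

lemma IsBlock.subset {X B : Set V} (h : IsBlock H X B) : B ⊆ X := by
  obtain ⟨x, _, rfl⟩ := h; exact blockOf_subset

lemma IsBlock.eq_of_mem {X B B' : Set V} (h : IsBlock H X B) (h' : IsBlock H X B')
    {z : V} (hz : z ∈ B) (hz' : z ∈ B') : B = B' := by
  obtain ⟨x, hx, rfl⟩ := h; obtain ⟨y, hy, rfl⟩ := h'
  rw [blockOf_eq_of_rw hz, blockOf_eq_of_rw hz']

lemma IsBlock.closed {X B : Set V} (h : IsBlock H X B) {b y : V} (hb : b ∈ B)
    (hy : y ∈ X) (hadj : H.Adj b y) : y ∈ B := by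
  obtain ⟨x, hx, rfl⟩ := h
  exact hb.trans ⟨hb.2.1, hy, Relation.ReflTransGen.single ⟨hb.2.1, hy, hadj⟩⟩

lemma exists_isBlock_mem {X : Set V} {x : V} (hx : x ∈ X) :
    ∃ B, IsBlock H X B ∧ x ∈ B := ⟨blockOf H X x, ⟨x, hx, rfl⟩, mem_blockOf_self hx⟩

/-- Reachability within `X` can be realized within the block itself. -/
lemma rw_blockOf {X : Set V} {x y : V} (h : RW H X x y) :
    RW H (blockOf H X x) x y := by
  obtain ⟨hx, hy, hgen⟩ := h
  clear hy
  induction hgen with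
  | refl => exact RW.refl (mem_blockOf_self hx)
  | @tail b c hab hbc ih =>
      have hb : RW H (blockOf H X x) x b := ih
      have hcB : c ∈ blockOf H X x := ⟨hx, hbc.2.1, hab.trans (Relation.ReflTransGen.single hbc)⟩
      exact hb.trans ⟨hb.2.1, hcB, Relation.ReflTransGen.single ⟨hb.2.1, hcB, hbc.2.2⟩⟩

lemma IsBlock.mem_of_rw {X B : Set V} (h : IsBlock H X B) {x d : V} (hx : x ∈ B)
    (hrw : RW H X x d) : d ∈ B := by
  obtain ⟨x0, hx0, rfl⟩ := h
  exact hx.trans hrw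

/-- Criterion for being a block: nonempty, internally connected, closed. -/
lemma isBlock_criterion {X B : Set V} (hBX : B ⊆ X) (hne : B.Nonempty)
    (hconn : ∀ x ∈ B, ∀ y ∈ B, RW H B x y)
    (hcl : ∀ b ∈ B, ∀ y ∈ X, H.Adj b y → y ∈ B) : IsBlock H X B := by
  obtain ⟨x, hx⟩ := hne
  refine ⟨x, hBX hx, ?_⟩
  ext y
  constructor
  · intro hy; exact (hconn x hx y hy).mono hBX
  · rintro ⟨hxX, hyX, hgen⟩
    clear hyX
    induction hgen with
    | refl => exact hx
    | @tail b c hab hbc ih => exact hcl b ih c hbc.2.1 hbc.2.2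

lemma IsBlock.conn {X B : Set V} (h : IsBlock H X B) :
    ∀ x ∈ B, ∀ y ∈ B, RW H B x y := by
  obtain ⟨x0, hx0, rfl⟩ := h
  intro x hx y hy
  have h1 : RW H (blockOf H X x0) x0 x := rw_blockOf hx
  have h2 : RW H (blockOf H X x0) x0 y := rw_blockOf hy
  exact h1.symm.trans h2

/-- A block survives when disjoint vertices are removed elsewhere. -/
lemma IsBlock.stay {X B W : Set V} (h : IsBlock H X B) (hW : Disjoint B W) :
    IsBlock H (X \ W) B := by
  refine isBlock_criterion (fun b hb => ⟨h.subset hb, fun hbW => hW.ne_of_mem hb hbW rfl⟩)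
    h.nonempty h.conn ?_
  intro b hb y hy hadj
  exact h.closed hb hy.1 hadj

/-- A block of `B \ W` is a block of `X \ W`, when `B` is a block of `X`. -/
lemma IsBlock.lift {X B W D : Set V} (hB : IsBlock H X B) (hD : IsBlock H (B \ W) D) :
    IsBlock H (X \ W) D := by
  refine isBlock_criterion ?_ hD.nonempty hD.conn ?_
  · intro d hd
    have := hD.subset hd
    exact ⟨hB.subset this.1, this.2⟩
  · intro b hb y hy hadj
    have hyB : y ∈ B := hB.closed (hD.subset hb).1 hy.1 hadj
    exact hD.closed hb ⟨hyB, hy.2⟩ hadj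

/-- Decomposition of blocks after removing a subset `W` of one block `B`. -/
lemma isBlock_remove_iff {X B W : Set V} (hB : IsBlock H X B) (hWB : W ⊆ B)
    (hWne : W.Nonempty) (D : Set V) :
    IsBlock H (X \ W) D ↔ ((IsBlock H X D ∧ D ≠ B) ∨ IsBlock H (B \ W) D) := by
  constructor
  · intro hD
    obtain ⟨x, hx⟩ := hD.nonempty
    have hxX : x ∈ X := (hD.subset hx).1
    obtain ⟨B1, hB1, hxB1⟩ := exists_isBlock_mem (H := H) hxX
    by_cases hcase : B1 = B
    · subst hcase
      right
      refine isBlock_criterion ?_ ⟨x, hx⟩ hD.conn ?_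
      · intro d hd
        have hrw : RW H (X \ W) x d := (hD.conn x hx d hd).mono hD.subset
        have hdB1 : d ∈ B1 := hB1.mem_of_rw hxB1 (hrw.mono (fun a ha => ha.1))
        exact ⟨hdB1, (hD.subset hd).2⟩
      · intro b hb y hy hadj
        exact hD.closed hb ⟨hB1.subset hy.1, hy.2⟩ hadj
    · left
      have hB1W : Disjoint B1 W := by
        rw [Set.disjoint_right]
        intro w hw hwB1
        exact hcase (hB1.eq_of_mem hB hwB1 (hWB hw))
      have hB1' : IsBlock H (X \ W) B1 := hB1.stay hB1W
      have : D = B1 := hD.eq_of_mem hB1' hx hxB1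
      subst this
      exact ⟨hB1, hcase⟩
  · rintro (⟨hD, hne⟩ | hD)
    · refine hD.stay ?_
      rw [Set.disjoint_right]
      intro w hw hwD
      exact hne (hD.eq_of_mem hB hwD (hWB hw))
    · exact hB.lift hD


variable [Fintype V]

/-- Number of blocks of `X` satisfying `P`. -/
noncomputable def cnt (H : SimpleGraph V) (P : Set V → Prop) (X : Set V) : ℕ :=
  {B | IsBlock H X B ∧ P B}.ncard

lemma cnt_remove {X B W : Set V} (P : Set V → Prop) (hB : IsBlock H X B) (hWB : W ⊆ B)
    (hWne : W.Nonempty) :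
    cnt H P (X \ W) + (if P B then 1 else 0) = cnt H P X + cnt H P (B \ W) := by
  classical
  have hident : {D | IsBlock H (X \ W) D ∧ P D}
      = ({D | IsBlock H X D ∧ P D} \ {B}) ∪ {D | IsBlock H (B \ W) D ∧ P D} := by
    ext D
    simp only [Set.mem_setOf_eq, Set.mem_union, Set.mem_diff, Set.mem_singleton_iff]
    constructor
    · rintro ⟨hD, hP⟩
      rcases (isBlock_remove_iff hB hWB hWne D).mp hD with (⟨h1, h2⟩ | h1)
      · exact Or.inl ⟨⟨h1, hP⟩, h2⟩
      · exact Or.inr ⟨h1, hP⟩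
    · rintro (⟨⟨h1, h2⟩, h3⟩ | ⟨h1, hP⟩)
      · exact ⟨(isBlock_remove_iff hB hWB hWne D).mpr (Or.inl ⟨h1, h3⟩), h2⟩
      · exact ⟨(isBlock_remove_iff hB hWB hWne D).mpr (Or.inr h1), hP⟩
  have hdisj : Disjoint ({D | IsBlock H X D ∧ P D} \ {B}) {D | IsBlock H (B \ W) D ∧ P D} := by
    rw [Set.disjoint_right]
    rintro D ⟨hD, _⟩ ⟨⟨hDX, _⟩, hne⟩
    obtain ⟨d, hd⟩ := hD.nonempty
    exact hne (hDX.eq_of_mem hB hd (hD.subset hd).1)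
  have key : cnt H P (X \ W)
      = ({D | IsBlock H X D ∧ P D} \ {B}).ncard + cnt H P (B \ W) := by
    rw [cnt, hident, Set.ncard_union_eq hdisj (Set.toFinite _) (Set.toFinite _)]; rfl
  have key2 : ({D | IsBlock H X D ∧ P D} \ {B}).ncard + (if P B then 1 else 0)
      = cnt H P X := by
    by_cases hP : P B
    · simp only [hP, if_true]
      exact Set.ncard_diff_singleton_add_one ⟨hB, hP⟩ (Set.toFinite _)
    · rw [if_neg hP, Set.diff_singleton_eq_self (by simp [hP]), add_zero]; rfl
  omega


lemma cnt_remove_pos {X B W : Set V} (P : Set V → Prop) (hB : IsBlock H X B) (hWB : W ⊆ B)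
    (hWne : W.Nonempty) (hPB : P B) :
    cnt H P (X \ W) + 1 = cnt H P X + cnt H P (B \ W) := by
  have h := cnt_remove P hB hWB hWne
  rwa [if_pos hPB] at h

lemma cnt_remove_neg {X B W : Set V} (P : Set V → Prop) (hB : IsBlock H X B) (hWB : W ⊆ B)
    (hWne : W.Nonempty) (hPB : ¬ P B) :
    cnt H P (X \ W) = cnt H P X + cnt H P (B \ W) := by
  have h := cnt_remove P hB hWB hWne
  rwa [if_neg hPB, add_zero] at h

lemma cnt_empty (P : Set V → Prop) : cnt H P ∅ = 0 := by
  have : {B | IsBlock H (∅ : Set V) B ∧ P B} = ∅ := by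
    ext B
    simp only [Set.mem_setOf_eq, Set.mem_empty_iff_false, iff_false]
    rintro ⟨hB, _⟩
    obtain ⟨b, hb⟩ := hB.nonempty
    exact (hB.subset hb)
  rw [cnt, this, Set.ncard_empty]

lemma blocks_self {X : Set V} (hX : IsBlock H X X) :
    {D | IsBlock H X D} = {X} := by
  ext D
  simp only [Set.mem_setOf_eq, Set.mem_singleton_iff]
  refine ⟨fun hD => ?_, fun h => h ▸ hX⟩
  obtain ⟨d, hd⟩ := hD.nonempty
  exact hD.eq_of_mem hX hd (hD.subset hd)

lemma cnt_self {X : Set V} (hX : IsBlock H X X) (P : Set V → Prop) :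
    cnt H P X = if P X then 1 else 0 := by
  by_cases hP : P X
  · have : {B | IsBlock H X B ∧ P B} = {X} := by
      ext B
      simp only [Set.mem_setOf_eq, Set.mem_singleton_iff]
      constructor
      · rintro ⟨h1, _⟩
        have := blocks_self hX
        exact Set.eq_of_mem_singleton (this ▸ h1 : B ∈ ({X} : Set (Set V)))
      · rintro rfl; exact ⟨hX, hP⟩
    rw [cnt, this, Set.ncard_singleton, if_pos hP]
  · have : {B | IsBlock H X B ∧ P B} = ∅ := by
      ext B
      simp only [Set.mem_setOf_eq, Set.mem_empty_iff_false, iff_false, not_and]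
      intro h1 h2
      have := blocks_self hX
      have hBX : B = X := Set.eq_of_mem_singleton (this ▸ h1 : B ∈ ({X} : Set (Set V)))
      exact hP (hBX ▸ h2)
    rw [cnt, this, Set.ncard_empty, if_neg hP]

lemma cnt_mono_pred {X : Set V} {P Q : Set V → Prop}
    (h : ∀ B, IsBlock H X B → P B → Q B) : cnt H P X ≤ cnt H Q X := by
  exact Set.ncard_le_ncard (fun B hB => ⟨hB.1, h B hB.1 hB.2⟩) (Set.toFinite _)

lemma cnt_congr_pred {X : Set V} {P Q : Set V → Prop}
    (h : ∀ B, IsBlock H X B → (P B ↔ Q B)) : cnt H P X = cnt H Q X :=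
  le_antisymm (cnt_mono_pred (fun B hB hP => (h B hB).mp hP))
    (cnt_mono_pred (fun B hB hQ => (h B hB).mpr hQ))

/-- The vertex set is partitioned by the blocks: cardinality as a sum. -/
lemma ncard_eq_sum_blocks (X : Set V) :
    X.ncard = ∑ B ∈ (Set.toFinite {D | IsBlock H X D}).toFinset, B.ncard := by
  classical
  have hcover : X.toFinset
      = ((Set.toFinite {D | IsBlock H X D}).toFinset).biUnion (fun D => D.toFinset) := by
    ext x
    simp only [Set.mem_toFinset, Finset.mem_biUnion, Set.Finite.mem_toFinset, Set.mem_setOf_eq]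
    constructor
    · intro hx
      obtain ⟨B, hB, hxB⟩ := exists_isBlock_mem (H := H) hx
      exact ⟨B, hB, by simpa using hxB⟩
    · rintro ⟨B, hB, hxB⟩
      exact hB.subset (by simpa using hxB)
  have hdisj : ∀ D1 ∈ (Set.toFinite {D | IsBlock H X D}).toFinset,
      ∀ D2 ∈ (Set.toFinite {D | IsBlock H X D}).toFinset, D1 ≠ D2 →
      Disjoint (D1.toFinset) (D2.toFinset) := by
    intro D1 h1 D2 h2 hne
    simp only [Set.Finite.mem_toFinset, Set.mem_setOf_eq] at h1 h2
    rw [Finset.disjoint_left]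
    intro a ha1 ha2
    simp only [Set.mem_toFinset] at ha1 ha2
    exact hne (h1.eq_of_mem h2 ha1 ha2)
  rw [Set.ncard_eq_toFinset_card', hcover, Finset.card_biUnion hdisj]
  exact Finset.sum_congr rfl (fun B _ => (Set.ncard_eq_toFinset_card' B).symm)

/-- Parity: the number of odd blocks is congruent to the number of vertices mod 2. -/
lemma cnt_odd_parity (X : Set V) :
    cnt H (fun B => Odd B.ncard) X % 2 = X.ncard % 2 := by
  classical
  rw [ncard_eq_sum_blocks (H := H) X]
  set F := (Set.toFinite {D | IsBlock H X D}).toFinset with hF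
  have hcnt : cnt H (fun B => Odd B.ncard) X = (F.filter (fun B => Odd B.ncard)).card := by
    rw [cnt, Set.ncard_eq_toFinset_card']
    congr 1
    ext B
    simp [hF]
  rw [hcnt, Finset.sum_nat_mod]
  have : ∑ B ∈ F, B.ncard % 2
      = ∑ B ∈ F.filter (fun B => Odd B.ncard), B.ncard % 2
        + ∑ B ∈ F.filter (fun B => ¬ Odd B.ncard), B.ncard % 2 :=
    (Finset.sum_filter_add_sum_filter_not F _ _).symm
  rw [this]
  have h1 : ∑ B ∈ F.filter (fun B => Odd B.ncard), B.ncard % 2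
      = (F.filter (fun B => Odd B.ncard)).card := by
    rw [Finset.card_eq_sum_ones]
    refine Finset.sum_congr rfl (fun B hB => ?_)
    simp only [Finset.mem_filter] at hB
    exact Nat.odd_iff.mp hB.2
  have h2 : ∑ B ∈ F.filter (fun B => ¬ Odd B.ncard), B.ncard % 2 = 0 := by
    refine Finset.sum_eq_zero (fun B hB => ?_)
    simp only [Finset.mem_filter] at hB
    exact Nat.even_iff.mp (Nat.not_odd_iff_even.mp hB.2)
  rw [h1, h2, add_zero]


section Bridge

lemma rw_of_walk {X : Set V} {a b : ↥X} (w : (H.induce X).Walk a b) :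
    RW H X a.1 b.1 := by
  induction w with
  | nil => exact RW.refl (Subtype.mem _)
  | @cons u v _ h p ih =>
      exact RW.trans ⟨Subtype.mem u, Subtype.mem v,
        Relation.ReflTransGen.single ⟨Subtype.mem u, Subtype.mem v, h⟩⟩ ih

lemma rw_iff_reachable {X : Set V} {x y : V} (hx : x ∈ X) (hy : y ∈ X) :
    RW H X x y ↔ (H.induce X).Reachable ⟨x, hx⟩ ⟨y, hy⟩ := by
  constructor
  · rintro ⟨hx', hy', hgen⟩
    clear hy'
    induction hgen with
    | refl => rfl
    | @tail b c hab hbc ih =>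
        exact (ih hbc.1).trans (SimpleGraph.Adj.reachable (by exact hbc.2.2))
  · rintro ⟨w⟩
    exact rw_of_walk w

lemma image_supp_mk_eq {X : Set V} (a : ↥X) :
    Subtype.val '' ((H.induce X).connectedComponentMk a).supp = blockOf H X a.1 := by
  ext y
  simp only [Set.mem_image, SimpleGraph.ConnectedComponent.mem_supp_iff]
  constructor
  · rintro ⟨b, hb, rfl⟩
    rw [SimpleGraph.ConnectedComponent.eq] at hb
    exact (rw_iff_reachable a.2 b.2).mpr (by simpa using hb.symm)
  · intro hy
    have hyX : y ∈ X := hy.2.1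
    refine ⟨⟨y, hyX⟩, ?_, rfl⟩
    rw [SimpleGraph.ConnectedComponent.eq]
    exact ((rw_iff_reachable a.2 hyX).mp hy).symm

lemma isBlock_image_supp {X : Set V} (c : (H.induce X).ConnectedComponent) :
    IsBlock H X (Subtype.val '' c.supp) := by
  induction c using SimpleGraph.ConnectedComponent.ind with
  | _ a => exact ⟨a.1, a.2, image_supp_mk_eq a⟩

lemma ncard_image_supp {X : Set V} (c : (H.induce X).ConnectedComponent) :
    (Subtype.val '' c.supp).ncard = Nat.card c.supp := by
  rw [Set.ncard_image_of_injective _ Subtype.val_injective, Nat.card_coe_set_eq]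

/-- θ expressed via blocks. -/
lemma card_odd_comps (X : Set V) :
    Nat.card {c : (H.induce X).ConnectedComponent // Odd (Nat.card c.supp)}
      = cnt H (fun B => Odd B.ncard) X := by
  rw [cnt, ← Nat.card_coe_set_eq]
  apply Nat.card_congr
  refine Equiv.ofBijective
    (fun c => ⟨Subtype.val '' c.1.supp, isBlock_image_supp c.1, by rw [ncard_image_supp]; exact c.2⟩) ?_
  constructor
  · rintro ⟨c, hc⟩ ⟨c', hc'⟩ h
    simp only [Subtype.mk.injEq] at h
    have := Set.image_injective.mpr Subtype.val_injective h
    exact Subtype.ext (SimpleGraph.ConnectedComponent.supp_injective this)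
  · rintro ⟨B, ⟨x, hx, rfl⟩, hodd⟩
    refine ⟨⟨(H.induce X).connectedComponentMk ⟨x, hx⟩, ?_⟩, ?_⟩
    · rw [← ncard_image_supp, image_supp_mk_eq]; exact hodd
    · simp only [Subtype.mk.injEq]
      exact image_supp_mk_eq _

end Bridge


/-- Every block has a non-cut vertex: removing it keeps the rest connected. -/
lemma exists_noncut {X B : Set V} (hB : IsBlock H X B) :
    ∃ x ∈ B, ∀ y ∈ B \ {x}, ∀ z ∈ B \ {x}, RW H (B \ {x}) y z := by
  classical
  set Γ := H.induce B with hΓ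
  have hne : Nonempty ↥B := Set.Nonempty.to_subtype hB.nonempty
  have hpre : Γ.Connected := by
    rw [SimpleGraph.connected_iff]
    refine ⟨fun a b => ?_, hne⟩
    have := hB.conn a.1 a.2 b.1 b.2
    have h2 := (rw_iff_reachable a.2 b.2).mp this
    simpa using h2
  obtain ⟨r⟩ := hne
  obtain ⟨x, -, hmax⟩ := Finset.exists_max_image (Finset.univ : Finset ↥B)
    (fun a => Γ.dist r a) ⟨r, Finset.mem_univ r⟩
  have hmax' : ∀ a : ↥B, Γ.dist r a ≤ Γ.dist r x := fun a => hmax a (Finset.mem_univ a)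
  -- every vertex other than x can reach r avoiding x
  have key : ∀ n : ℕ, ∀ y : ↥B, y ≠ x → Γ.dist r y ≤ n → y = r ∨ RW H (B \ {x.1}) y.1 r.1 := by
    intro n
    induction n with
    | zero =>
        intro y hyx hdist
        left
        have : Γ.dist r y = 0 := Nat.le_zero.mp hdist
        rcases SimpleGraph.dist_eq_zero_iff_eq_or_not_reachable.mp this with h | h
        · exact h.symm
        · exact absurd (hpre.preconnected r y) h
    | succ n ih =>
        intro y hyx hdist
        by_cases hle : Γ.dist r y ≤ n
        · exact ih y hyx hle
        · have hdist' : Γ.dist r y = n + 1 := le_antisymm hdist (not_le.mp hle)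
          obtain ⟨w, hw⟩ := (hpre.preconnected r y).exists_walk_length_eq_dist
          -- reverse walk from y to r
          have hry : (Γ.dist y r) = n + 1 := by rwa [SimpleGraph.dist_comm]
          obtain ⟨w', hw'⟩ := (hpre.preconnected y r).exists_walk_length_eq_dist
          rw [hry] at hw'
          cases w' with
          | nil => simp at hw'
          | @cons _ b _ hadj p =>
              have hplen : p.length = n := by simpa using hw'
              have hdb : Γ.dist r b ≤ n := by
                rw [SimpleGraph.dist_comm]
                exact hplen ▸ SimpleGraph.dist_le p
              have hbx : b ≠ x := by
                intro hbx
                subst hbx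
                have := hmax' y
                omega
              have hstep : RW H (B \ {x.1}) y.1 b.1 := by
                refine ⟨⟨y.2, ?_⟩, ⟨b.2, ?_⟩, Relation.ReflTransGen.single
                  ⟨⟨y.2, ?_⟩, ⟨b.2, ?_⟩, ?_⟩⟩
                · exact fun h => hyx (Subtype.ext h)
                · exact fun h => hbx (Subtype.ext h)
                · exact fun h => hyx (Subtype.ext h)
                · exact fun h => hbx (Subtype.ext h)
                · exact hadj
              rcases ih b hbx hdb with rfl | hrw
              · exact Or.inr hstep
              · exact Or.inr (hstep.trans hrw)
  refine ⟨x.1, x.2, ?_⟩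
  have main : ∀ y ∈ B \ {x.1}, RW H (B \ {x.1}) y r.1 ∨ (y = r.1 ∧ r ≠ x) := by
    intro y hy
    have hyB : y ∈ B := hy.1
    have hyx : (⟨y, hyB⟩ : ↥B) ≠ x := fun h => hy.2 (congrArg Subtype.val h)
    rcases key (Γ.dist r ⟨y, hyB⟩) ⟨y, hyB⟩ hyx le_rfl with h | h
    · right
      constructor
      · exact congrArg Subtype.val h
      · rw [← h]; exact hyx
    · left; exact h
  intro y hy z hz
  rcases main y hy with h1 | h1 <;> rcases main z hz with h2 | h2
  · exact h1.trans h2.symm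
  · rw [h2.1]; exact h1
  · rw [h1.1]; exact h2.symm
  · rw [h1.1, h2.1]; exact RW.refl (h1.1 ▸ hy)


lemma noncut_self {X B : Set V} (hB : IsBlock H X B) :
    ∃ x ∈ B, ((B \ {x}) = ∅ ∨ IsBlock H (B \ {x}) (B \ {x})) := by
  obtain ⟨x, hx, hconn⟩ := exists_noncut hB
  refine ⟨x, hx, ?_⟩
  rcases Set.eq_empty_or_nonempty (B \ {x}) with h | h
  · exact Or.inl h
  · exact Or.inr (isBlock_criterion subset_rfl h hconn (fun b hb y hy _ => hy))

lemma cnt_odd_pos_exists {X : Set V} (h : 0 < cnt H (fun B => Odd B.ncard) X) :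
    ∃ B, IsBlock H X B ∧ Odd B.ncard := by
  have := Set.nonempty_of_ncard_ne_zero (Nat.pos_iff_ne_zero.mp h)
  obtain ⟨B, hB⟩ := this
  exact ⟨B, hB⟩

/-- Climbing down to an exact barrier. -/
lemma exists_barrier_ext : ∀ (k : ℕ) (W : Set V),
    cnt H (fun B => Odd B.ncard) Wᶜ = W.ncard + 2 * k →
    ∃ W', W ⊆ W' ∧ cnt H (fun B => Odd B.ncard) W'ᶜ = W'.ncard := by
  intro k
  induction k with
  | zero => intro W h; exact ⟨W, subset_rfl, by omega⟩
  | succ k ih =>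
      intro W h
      have hpos : 0 < cnt H (fun B => Odd B.ncard) Wᶜ := by omega
      obtain ⟨B, hB, hodd⟩ := cnt_odd_pos_exists hpos
      obtain ⟨x, hx, hsplit⟩ := noncut_self hB
      have hxW : x ∉ W := (hB.subset hx : x ∈ Wᶜ)
      have hrem := cnt_remove_pos (H := H) (fun B => Odd B.ncard) hB
        (Set.singleton_subset_iff.mpr hx) ⟨x, rfl⟩ hodd
      have hzero : cnt H (fun B => Odd B.ncard) (B \ {x}) = 0 := by
        rcases hsplit with h0 | h0
        · rw [h0]; exact cnt_empty _
        · rw [cnt_self h0]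
          have hBx : (B \ {x}).ncard = B.ncard - 1 :=
            Set.ncard_diff_singleton_of_mem hx
          have : ¬ Odd ((B \ {x}).ncard) := by
            rw [hBx, Nat.odd_iff]
            rw [Nat.odd_iff] at hodd
            have hpos : 1 ≤ B.ncard := (Set.ncard_pos (Set.toFinite _)).mpr ⟨x, hx⟩
            omega
          rw [if_neg this]
      rw [hzero, add_zero] at hrem
      have hcompl : Wᶜ \ {x} = (insert x W)ᶜ := by
        ext y
        simp only [Set.mem_diff, Set.mem_compl_iff, Set.mem_insert_iff, Set.mem_singleton_iff]
        tauto
      have hcard : (insert x W).ncard = W.ncard + 1 := Set.ncard_insert_of_notMem hxW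
      have : cnt H (fun B => Odd B.ncard) (insert x W)ᶜ = (insert x W).ncard + 2 * k := by
        rw [← hcompl]
        omega
      obtain ⟨W', hW', heq⟩ := ih (insert x W) this
      exact ⟨W', (Set.subset_insert x W).trans hW', heq⟩

end MatchAux

namespace Multigraph

open MatchAux

variable {V E : Type}

/-- Vertices carrying a loop. -/
def Lset (G : Multigraph V E) : Set V := {v | ∃ e, G.ends e = s(v, v)}

lemma pm_congr (G : Multigraph V E) {A A' : Set V} {M : Set E}
    (h : G.IsPerfectMatchingOn A M) (hAA : A = A') : G.IsPerfectMatchingOn A' M := hAA ▸ h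

lemma pm_empty (G : Multigraph V E) : G.IsPerfectMatchingOn (∅ : Set V) (∅ : Set E) := by
  constructor
  · intro e he; exact absurd he (Set.notMem_empty e)
  · intro v hv; exact absurd hv (Set.notMem_empty v)

lemma pm_loop (G : Multigraph V E) {v : V} {e : E} (he : G.ends e = s(v, v)) :
    G.IsPerfectMatchingOn {v} {e} := by
  constructor
  · intro e' he' w hw
    rw [Set.mem_singleton_iff.mp he', he] at hw
    simp only [Sym2.mem_iff] at hw
    rcases hw with h | h <;> exact h
  · intro w hw
    rw [Set.mem_singleton_iff.mp hw]
    refine ⟨e, ⟨rfl, by rw [he]; simp⟩, ?_⟩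
    rintro e' ⟨he', _⟩
    exact he'

lemma pm_edge (G : Multigraph V E) {x y : V} {e : E} (he : G.ends e = s(x, y)) (hxy : x ≠ y) :
    G.IsPerfectMatchingOn {x, y} {e} := by
  constructor
  · intro e' he' w hw
    rw [Set.mem_singleton_iff.mp he', he] at hw
    have : w = x ∨ w = y := by simpa using hw
    rcases this with rfl | rfl
    · exact Set.mem_insert _ _
    · exact Set.mem_insert_of_mem _ rfl
  · intro w hw
    have hw' : w = x ∨ w = y := by simpa using hw
    refine ⟨e, ⟨rfl, by rw [he]; rcases hw' with rfl | rfl <;> simp⟩, ?_⟩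
    rintro e' ⟨he', _⟩
    exact he'

lemma pm_iUnion (G : Multigraph V E) {ι : Type} {A : ι → Set V} {M : ι → Set E}
    (hdisj : Pairwise (Function.onFun Disjoint A))
    (h : ∀ i, G.IsPerfectMatchingOn (A i) (M i)) :
    G.IsPerfectMatchingOn (⋃ i, A i) (⋃ i, M i) := by
  constructor
  · rintro e he v hv
    obtain ⟨i, hi⟩ := Set.mem_iUnion.mp he
    exact Set.mem_iUnion.mpr ⟨i, (h i).1 e hi v hv⟩
  · intro v hv
    obtain ⟨i, hi⟩ := Set.mem_iUnion.mp hv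
    obtain ⟨e, ⟨heM, hev⟩, huniq⟩ := (h i).2 v hi
    refine ⟨e, ⟨Set.mem_iUnion.mpr ⟨i, heM⟩, hev⟩, ?_⟩
    rintro e' ⟨he'M, he'v⟩
    obtain ⟨j, hj⟩ := Set.mem_iUnion.mp he'M
    have hvj : v ∈ A j := (h j).1 e' hj v he'v
    have hij : i = j := by
      by_contra hne
      exact Set.disjoint_left.mp (hdisj hne) hi hvj
    subst hij
    exact huniq e' ⟨hj, he'v⟩

lemma pm_union (G : Multigraph V E) {A1 A2 : Set V} {M1 M2 : Set E}
    (hdisj : Disjoint A1 A2) (h1 : G.IsPerfectMatchingOn A1 M1)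
    (h2 : G.IsPerfectMatchingOn A2 M2) :
    G.IsPerfectMatchingOn (A1 ∪ A2) (M1 ∪ M2) := by
  have key := pm_iUnion G (ι := Bool) (A := fun b => cond b A1 A2) (M := fun b => cond b M1 M2)
    (by
      intro i j hij
      cases i <;> cases j
      · exact absurd rfl hij
      · exact hdisj.symm
      · exact hdisj
      · exact absurd rfl hij)
    (by
      intro i
      cases i
      · exact h2
      · exact h1)
  have hA : (⋃ b : Bool, cond b A1 A2) = A1 ∪ A2 := by
    ext v; simp only [Set.mem_iUnion, Bool.exists_bool, Set.mem_union, cond]; tauto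
  have hM : (⋃ b : Bool, cond b M1 M2) = M1 ∪ M2 := by
    ext v; simp only [Set.mem_iUnion, Bool.exists_bool, Set.mem_union, cond]; tauto
  rw [hA, hM] at key
  exact key

lemma blocks_disjoint {V : Type} {H : SimpleGraph V} {X B B' : Set V}
    (hB : MatchAux.IsBlock H X B) (hB' : MatchAux.IsBlock H X B') (hne : B ≠ B') :
    Disjoint B B' := by
  rw [Set.disjoint_left]
  intro a ha ha'
  exact hne (hB.eq_of_mem hB' ha ha')

variable [Fintype V] [Fintype E]

open MatchAux

/-- The predicate for loop-free odd blocks. -/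
def Pfree (G : Multigraph V E) : Set V → Prop :=
  fun B => Odd B.ncard ∧ Disjoint B (Lset G)

/-- Tutte's theorem with loops: the Tutte condition implies a perfect matching. -/
theorem loop_tutte (G : Multigraph V E) :
    ∀ (n : ℕ) (A : Set V), A.ncard ≤ n →
    (∀ T ⊆ A, cnt G.toSimple (Pfree G) (A \ T) ≤ T.ncard) →
    ∃ M, G.IsPerfectMatchingOn A M := by
  classical
  intro n
  induction n with
  | zero =>
      intro A hA _
      have : A = ∅ := (Set.ncard_eq_zero (Set.toFinite _)).mp (by omega)
      exact this ▸ ⟨∅, G.pm_empty⟩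
  | succ n IH =>
      intro A hA hc
      rcases Set.eq_empty_or_nonempty A with rfl | hAne
      · exact ⟨∅, G.pm_empty⟩
      set H := G.toSimple with hH
      set L := Lset G with hL
      obtain ⟨T, ⟨hTA, hTeq⟩, hTmax⟩ := Set.exists_max_image
        {T : Set V | T ⊆ A ∧ cnt H (Pfree G) (A \ T) = T.ncard} Set.ncard (Set.toFinite _)
        ⟨∅, Set.empty_subset A, by
          have h0 := hc ∅ (Set.empty_subset A)
          simp only [Set.ncard_empty] at h0 ⊢
          rw [Set.diff_empty] at h0 ⊢
          omega⟩
      set X := A \ T with hX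
      have hXA : X ⊆ A := Set.diff_subset
      -- C1: every loop-free block is odd
      have C1 : ∀ B, IsBlock H X B → Disjoint B L → Odd B.ncard := by
        intro B hB hBL
        by_contra hodd
        obtain ⟨x, hx, hsplit⟩ := noncut_self hB
        have hBpos : 0 < B.ncard := (Set.ncard_pos (Set.toFinite _)).mpr hB.nonempty
        have hBeven : B.ncard % 2 = 0 := Nat.even_iff.mp (Nat.not_odd_iff_even.mp hodd)
        have hBxne : (B \ {x}).Nonempty := by
          rw [← Set.ncard_pos (Set.toFinite _), Set.ncard_diff_singleton_of_mem hx]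
          omega
        have hBxblk : IsBlock H (B \ {x}) (B \ {x}) := by
          rcases hsplit with h0 | h0
          · exact absurd h0 (Set.nonempty_iff_ne_empty.mp hBxne)
          · exact h0
        have hcnt1 : cnt H (Pfree G) (B \ {x}) = 1 := by
          rw [cnt_self hBxblk, if_pos]
          constructor
          · rw [Set.ncard_diff_singleton_of_mem hx, Nat.odd_iff]; omega
          · exact Set.disjoint_of_subset_left Set.diff_subset hBL
        have hrem := cnt_remove_neg (H := H) (Pfree G) hB (Set.singleton_subset_iff.mpr hx)
          ⟨x, rfl⟩ (fun hP => hodd hP.1)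
        rw [hcnt1, hTeq] at hrem
        have hxX : x ∈ X := hB.subset hx
        have hins : X \ {x} = A \ insert x T := by
          ext y
          simp only [hX, Set.mem_diff, Set.mem_insert_iff, Set.mem_singleton_iff]
          tauto
        have hxT : x ∉ T := hxX.2
        have hcard : (insert x T).ncard = T.ncard + 1 := Set.ncard_insert_of_notMem hxT
        have hmem : insert x T ∈ {T : Set V | T ⊆ A ∧ cnt H (Pfree G) (A \ T) = T.ncard} :=
          ⟨Set.insert_subset hxX.1 hTA, by rw [← hins, hrem, hcard]⟩
        have := hTmax _ hmem
        omega
      -- C2: the Tutte condition holds on B minus a vertex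
      have C2 : ∀ B, IsBlock H X B → ∀ v ∈ B, (Disjoint B L ∨ v ∈ L) →
          ∀ T'' ⊆ B \ {v}, cnt H (Pfree G) ((B \ {v}) \ T'') ≤ T''.ncard := by
        intro B hB v hv hcase T'' hT''
        by_contra hlt
        push_neg at hlt
        set W : Set V := insert v T'' with hW
        have hWB : W ⊆ B := Set.insert_subset hv (hT''.trans Set.diff_subset)
        have hWne : W.Nonempty := ⟨v, Set.mem_insert _ _⟩
        have hvT'' : v ∉ T'' := fun h => (hT'' h).2 rfl
        have hWcard : W.ncard = T''.ncard + 1 := Set.ncard_insert_of_notMem hvT''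
        have hBW : (B \ {v}) \ T'' = B \ W := by
          ext y
          simp only [hW, Set.mem_diff, Set.mem_insert_iff, Set.mem_singleton_iff]
          tauto
        have hgeq : T''.ncard + 1 ≤ cnt H (Pfree G) (B \ W) := by rw [← hBW]; omega
        have hkey : T.ncard + T''.ncard + 1 ≤ cnt H (Pfree G) (X \ W) := by
          rcases em (Disjoint B L) with hfree | hloop
          · have hodd := C1 B hB hfree
            have hparity : cnt H (Pfree G) (B \ W) % 2 = (B \ W).ncard % 2 := by
              rw [cnt_congr_pred (Q := fun D => Odd D.ncard) (fun D hD => ?_), cnt_odd_parity]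
              exact ⟨fun h => h.1, fun h =>
                ⟨h, Set.disjoint_of_subset_left (hD.subset.trans Set.diff_subset) hfree⟩⟩
            have hcardBW : (B \ W).ncard = B.ncard - W.ncard := Set.ncard_diff hWB
            have hWle : W.ncard ≤ B.ncard := Set.ncard_le_ncard hWB
            have hoddm : B.ncard % 2 = 1 := Nat.odd_iff.mp hodd
            have h2 : T''.ncard + 2 ≤ cnt H (Pfree G) (B \ W) := by omega
            have hrem := cnt_remove_pos (H := H) (Pfree G) hB hWB hWne ⟨hodd, hfree⟩
            omega
          · have hrem := cnt_remove_neg (H := H) (Pfree G) hB hWB hWne (fun hP => hloop hP.2)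
            omega
        have hXW : X \ W = A \ (T ∪ W) := by
          ext y
          simp only [hX, Set.mem_diff, Set.mem_union]
          tauto
        have hdTW : Disjoint T W := by
          rw [Set.disjoint_left]
          intro a ha haW
          exact (hB.subset (hWB haW)).2 ha
        have hTW : (T ∪ W).ncard = T.ncard + W.ncard := Set.ncard_union_eq hdTW
        have hsub : T ∪ W ⊆ A := Set.union_subset hTA ((hWB.trans hB.subset).trans hXA)
        have hle := hc (T ∪ W) hsub
        rw [← hXW] at hle
        have heq : cnt H (Pfree G) (A \ (T ∪ W)) = (T ∪ W).ncard := by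
          rw [← hXW]; omega
        have := hTmax _ ⟨hsub, heq⟩
        omega
      -- perfect matchings on blocks minus a vertex
      have PMblk : ∀ B, IsBlock H X B → ∀ v ∈ B, (Disjoint B L ∨ v ∈ L) →
          ∃ M, G.IsPerfectMatchingOn (B \ {v}) M := by
        intro B hB v hv hcase
        apply IH (B \ {v})
        · have h1 : B.ncard ≤ A.ncard := Set.ncard_le_ncard (hB.subset.trans hXA)
          have h2 : 0 < B.ncard := (Set.ncard_pos (Set.toFinite _)).mpr ⟨v, hv⟩
          rw [Set.ncard_diff_singleton_of_mem hv]
          omega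
        · exact C2 B hB v hv hcase
      -- perfect matchings on looped blocks
      have PMloop : ∀ B, IsBlock H X B → ¬ Disjoint B L → ∃ M, G.IsPerfectMatchingOn B M := by
        intro B hB hBL
        obtain ⟨v0, hv0B, hv0L⟩ := Set.not_disjoint_iff.mp hBL
        obtain ⟨e0, he0⟩ := hv0L
        obtain ⟨M', hM'⟩ := PMblk B hB v0 hv0B (Or.inr ⟨e0, he0⟩)
        have hdisj : Disjoint ({v0} : Set V) (B \ {v0}) := by
          rw [Set.disjoint_left]
          rintro a rfl ha
          exact ha.2 rfl
        have hpm := G.pm_union hdisj (G.pm_loop he0) hM'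
        refine ⟨{e0} ∪ M', G.pm_congr hpm ?_⟩
        rw [Set.singleton_union, Set.insert_diff_singleton, Set.insert_eq_self.mpr hv0B]
      -- Hall's theorem for the free blocks
      haveI : Fintype ↥{B | IsBlock H X B ∧ Pfree G B} := (Set.toFinite _).fintype
      set t : ↥{B | IsBlock H X B ∧ Pfree G B} → Finset V :=
        fun B => (Set.toFinite {u | u ∈ T ∧ ∃ b ∈ (B : Set V), H.Adj u b}).toFinset with ht
      have hHall : ∀ s : Finset ↥{B | IsBlock H X B ∧ Pfree G B},
          s.card ≤ (s.biUnion t).card := by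
        intro s
        set U : Set V := ↑(s.biUnion t) with hU
        have hUT : U ⊆ T := by
          intro u hu
          obtain ⟨B, hBs, hmem⟩ := Finset.mem_biUnion.mp hu
          exact ((Set.Finite.mem_toFinset _).mp hmem).1
        have hstay : ∀ B : ↥{B | IsBlock H X B ∧ Pfree G B}, B ∈ s →
            IsBlock H (A \ U) (B : Set V) := by
          intro B hBs
          refine isBlock_criterion ?_ B.2.1.nonempty B.2.1.conn ?_
          · intro b hb
            have h1 := B.2.1.subset hb
            exact ⟨h1.1, fun hUb => h1.2 (hUT hUb)⟩
          · intro b hb y hy hadj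
            by_cases hyT : y ∈ T
            · exfalso
              apply hy.2
              have : y ∈ t B := (Set.Finite.mem_toFinset _).mpr ⟨hyT, b, hb, hadj.symm⟩
              exact Finset.mem_coe.mpr (Finset.mem_biUnion.mpr ⟨B, hBs, this⟩)
            · exact B.2.1.closed hb ⟨hy.1, hyT⟩ hadj
        have hinj : Set.InjOn (fun B : ↥{B | IsBlock H X B ∧ Pfree G B} => (B : Set V)) ↑s :=
          fun a _ b _ h => Subtype.ext h
        have himage : (fun B : ↥{B | IsBlock H X B ∧ Pfree G B} => (B : Set V)) '' ↑s
            ⊆ {D | IsBlock H (A \ U) D ∧ Pfree G D} := by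
          rintro D ⟨B, hBs, rfl⟩
          exact ⟨hstay B hBs, B.2.2⟩
        have hn1 : ((fun B : ↥{B | IsBlock H X B ∧ Pfree G B} => (B : Set V)) '' ↑s).ncard
            = s.card := by
          rw [Set.ncard_image_of_injOn hinj, Set.ncard_coe_finset]
        have hn2 := Set.ncard_le_ncard himage (Set.toFinite _)
        have hn3 := hc U (hUT.trans hTA)
        have hn4 : U.ncard = (s.biUnion t).card := Set.ncard_coe_finset _
        calc s.card = _ := hn1.symm
          _ ≤ cnt H (Pfree G) (A \ U) := hn2
          _ ≤ U.ncard := hn3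
          _ = _ := hn4
      obtain ⟨f, hfinj, hft⟩ := (Finset.all_card_le_biUnion_card_iff_exists_injective t).mp hHall
      have hfT : ∀ B, f B ∈ T := fun B => ((Set.Finite.mem_toFinset _).mp (hft B)).1
      have hcardι : Fintype.card ↥{B | IsBlock H X B ∧ Pfree G B} = T.ncard := by
        rw [← Nat.card_eq_fintype_card, Nat.card_coe_set_eq]
        exact hTeq
      have hfsurj : ∀ u ∈ T, ∃ B, f B = u := by
        have hsub : Finset.image f Finset.univ ⊆ T.toFinset := by
          intro u hu
          obtain ⟨B, _, rfl⟩ := Finset.mem_image.mp hu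
          exact Set.mem_toFinset.mpr (hfT B)
        have hcard : T.toFinset.card ≤ (Finset.image f Finset.univ).card := by
          rw [Finset.card_image_of_injective _ hfinj, Finset.card_univ, hcardι,
            Set.ncard_eq_toFinset_card']
        have heq := Finset.eq_of_subset_of_card_le hsub hcard
        intro u hu
        have : u ∈ Finset.image f Finset.univ := heq ▸ Set.mem_toFinset.mpr hu
        obtain ⟨B, _, hB⟩ := Finset.mem_image.mp this
        exact ⟨B, hB⟩
      -- perfect matchings on {f B} ∪ B for free blocks
      have hPMfree : ∀ B : ↥{B | IsBlock H X B ∧ Pfree G B},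
          ∃ M, G.IsPerfectMatchingOn ({f B} ∪ (B : Set V)) M := by
        intro B
        obtain ⟨hfT', b, hbB, hadj⟩ := (Set.Finite.mem_toFinset _).mp (hft B)
        obtain ⟨hne, e, he⟩ := hadj
        obtain ⟨M', hM'⟩ := PMblk B B.2.1 b hbB (Or.inl B.2.2.2)
        have hfBX : f B ∉ (B : Set V) := fun h => (B.2.1.subset h).2 hfT'
        have hdisj : Disjoint ({f B, b} : Set V) ((B : Set V) \ {b}) := by
          rw [Set.disjoint_left]
          rintro a (rfl | rfl) ha
          · exact hfBX ha.1
          · exact ha.2 rfl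
        have hpm := G.pm_union hdisj (G.pm_edge he hne) hM'
        refine ⟨{e} ∪ M', G.pm_congr hpm ?_⟩
        ext y
        simp only [Set.mem_union, Set.mem_insert_iff, Set.mem_singleton_iff, Set.mem_diff]
        constructor
        · rintro ((rfl | rfl) | ⟨h1, _⟩)
          · exact Or.inl rfl
          · exact Or.inr hbB
          · exact Or.inr h1
        · rintro (rfl | hyB)
          · exact Or.inl (Or.inl rfl)
          · by_cases hyb : y = b
            · exact Or.inl (Or.inr hyb)
            · exact Or.inr ⟨hyB, hyb⟩
      -- final assembly
      haveI : Fintype ↥{B | IsBlock H X B ∧ ¬ Disjoint B L} := (Set.toFinite _).fintype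
      have hPMloop2 : ∀ B : ↥{B | IsBlock H X B ∧ ¬ Disjoint B L},
          ∃ M, G.IsPerfectMatchingOn (B : Set V) M := fun B => PMloop B B.2.1 B.2.2
      set AF : (↥{B | IsBlock H X B ∧ Pfree G B} ⊕ ↥{B | IsBlock H X B ∧ ¬ Disjoint B L})
          → Set V := Sum.elim (fun B => {f B} ∪ (B : Set V)) (fun B => (B : Set V)) with hAF
      set MF : (↥{B | IsBlock H X B ∧ Pfree G B} ⊕ ↥{B | IsBlock H X B ∧ ¬ Disjoint B L})
          → Set E := Sum.elim (fun B => Classical.choose (hPMfree B))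
          (fun B => Classical.choose (hPMloop2 B)) with hMF
      have hPMall : ∀ k, G.IsPerfectMatchingOn (AF k) (MF k) := by
        rintro (B | B)
        · exact Classical.choose_spec (hPMfree B)
        · exact Classical.choose_spec (hPMloop2 B)
      have hdisjAF : Pairwise (Function.onFun Disjoint AF) := by
        have haux : ∀ (B B' : Set V), IsBlock H X B → IsBlock H X B' → B ≠ B' →
            ∀ u u' : V, u ∈ T → u' ∈ T →
            Disjoint ({u} ∪ B) ({u'} ∪ B') → True := fun _ _ _ _ _ _ _ _ _ _ => trivial
        rintro (B | B) (B' | B') hne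
        · have hBB' : (B : Set V) ≠ (B' : Set V) := by
            intro h
            exact hne (congrArg Sum.inl (Subtype.ext h))
          have hdBB := blocks_disjoint B.2.1 B'.2.1 hBB'
          have hff : f B ≠ f B' := fun h => hne (congrArg Sum.inl (hfinj h))
          simp only [Function.onFun, hAF, Sum.elim_inl]
          rw [Set.disjoint_left]
          rintro a (rfl | haB) ha'
          · rcases ha' with h | h
            · exact hff (Set.mem_singleton_iff.mp h)
            · exact (B'.2.1.subset h).2 (hfT B)
          · rcases ha' with h | h
            · rw [Set.mem_singleton_iff.mp h] at haB
              exact (B.2.1.subset haB).2 (hfT B')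
            · exact Set.disjoint_left.mp hdBB haB h
        · have hBB' : (B : Set V) ≠ (B' : Set V) := by
            intro h
            apply B'.2.2
            rw [← h]
            exact B.2.2.2
          have hdBB := blocks_disjoint B.2.1 B'.2.1 hBB'
          simp only [Function.onFun, hAF, Sum.elim_inl, Sum.elim_inr]
          rw [Set.disjoint_left]
          rintro a (rfl | haB) ha'
          · exact (B'.2.1.subset ha').2 (hfT B)
          · exact Set.disjoint_left.mp hdBB haB ha'
        · have hBB' : (B : Set V) ≠ (B' : Set V) := by
            intro h
            apply B.2.2
            rw [h]
            exact B'.2.2.2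
          have hdBB := blocks_disjoint B.2.1 B'.2.1 hBB'
          simp only [Function.onFun, hAF, Sum.elim_inl, Sum.elim_inr]
          rw [Set.disjoint_left]
          rintro a haB ha'
          rcases ha' with h | h
          · rw [Set.mem_singleton_iff.mp h] at haB
            exact (B.2.1.subset haB).2 (hfT B')
          · exact Set.disjoint_left.mp hdBB haB h
        · have hBB' : (B : Set V) ≠ (B' : Set V) := by
            intro h
            exact hne (congrArg Sum.inr (Subtype.ext h))
          have hdBB := blocks_disjoint B.2.1 B'.2.1 hBB'
          simp only [Function.onFun, hAF, Sum.elim_inr]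
          exact hdBB
      have hcover : (⋃ k, AF k) = A := by
        apply Set.eq_of_subset_of_subset
        · intro y hy
          obtain ⟨k, hk⟩ := Set.mem_iUnion.mp hy
          rcases k with B | B
          · simp only [hAF, Sum.elim_inl, Set.mem_union, Set.mem_singleton_iff] at hk
            rcases hk with rfl | h
            · exact hTA (hfT B)
            · exact hXA (B.2.1.subset h)
          · simp only [hAF, Sum.elim_inr] at hk
            exact hXA (B.2.1.subset hk)
        · intro y hy
          by_cases hyT : y ∈ T
          · obtain ⟨B, hB⟩ := hfsurj y hyT
            refine Set.mem_iUnion.mpr ⟨Sum.inl B, ?_⟩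
            simp only [hAF, Sum.elim_inl, Set.mem_union, Set.mem_singleton_iff]
            exact Or.inl hB.symm
          · have hyX : y ∈ X := ⟨hy, hyT⟩
            obtain ⟨B, hB, hyB⟩ := exists_isBlock_mem (H := H) hyX
            rcases em (Disjoint B L) with hfree | hloop
            · refine Set.mem_iUnion.mpr ⟨Sum.inl ⟨B, hB, C1 B hB hfree, hfree⟩, ?_⟩
              simp only [hAF, Sum.elim_inl, Set.mem_union]
              exact Or.inr hyB
            · refine Set.mem_iUnion.mpr ⟨Sum.inr ⟨B, hB, hloop⟩, ?_⟩
              simpa only [hAF, Sum.elim_inr] using hyB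
      exact ⟨⋃ k, MF k, G.pm_congr (G.pm_iUnion hdisjAF hPMall) hcover⟩

end Multigraph


/-- In a matching covered graph, every component of G − S, for a maximal
barrier S, is factor-critical. -/
theorem maximal_barrier_components_factorCritical {V E : Type} [Fintype V] [Fintype E]
    (G : Multigraph V E) (hconn : G.Connected)
    (hmc : ∀ e : E, ∃ M : Set E, G.IsPerfectMatching M ∧ e ∈ M)
    (S : Set V) (hS : G.IsBarrier S)
    (hmax : ∀ T : Set V, G.IsBarrier T → S ⊆ T → T = S) :
    ∀ c : (G.toSimple.induce Sᶜ).ConnectedComponent,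
      ∀ u ∈ Subtype.val '' c.supp,
        ∃ M : Set E, G.IsPerfectMatchingOn (Subtype.val '' c.supp \ {u}) M := by
  classical
  intro c u hu
  set C : Set V := Subtype.val '' c.supp with hC
  have hCblk : MatchAux.IsBlock G.toSimple Sᶜ C := MatchAux.isBlock_image_supp c
  have hCS : C ⊆ Sᶜ := hCblk.subset
  -- the barrier condition in terms of block counts
  have hbar : MatchAux.cnt G.toSimple (fun B => Odd B.ncard) Sᶜ = S.ncard := by
    have h1 := MatchAux.card_odd_comps (H := G.toSimple) Sᶜ
    have h2 : G.theta S = Nat.card S := hS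
    rw [Multigraph.theta] at h2
    rw [← h1, h2, Nat.card_coe_set_eq]
  have huniv : S.ncard + Sᶜ.ncard = Nat.card V :=
    Set.ncard_add_ncard_compl S
  have hparS := MatchAux.cnt_odd_parity (H := G.toSimple) Sᶜ
  have hVeven : Nat.card V % 2 = 0 := by omega
  -- the Tutte condition for C \ {u}
  have hcond : ∀ T' ⊆ C \ {u}, MatchAux.cnt G.toSimple (Multigraph.Pfree G) ((C \ {u}) \ T') ≤ T'.ncard := by
    by_contra hcon
    push_neg at hcon
    obtain ⟨T', hT'sub, hgt⟩ := hcon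
    set W : Set V := insert u T' with hW
    have huC : u ∈ C := hu
    have hWC : W ⊆ C := Set.insert_subset huC (hT'sub.trans Set.diff_subset)
    have hWne : W.Nonempty := ⟨u, Set.mem_insert _ _⟩
    have huT' : u ∉ T' := fun h => (hT'sub h).2 rfl
    have hWcard : W.ncard = T'.ncard + 1 := Set.ncard_insert_of_notMem huT'
    have hCW : (C \ {u}) \ T' = C \ W := by
      ext y
      simp only [hW, Set.mem_diff, Set.mem_insert_iff, Set.mem_singleton_iff]
      tauto
    have hmono : MatchAux.cnt G.toSimple (Multigraph.Pfree G) (C \ W)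
        ≤ MatchAux.cnt G.toSimple (fun B => Odd B.ncard) (C \ W) :=
      MatchAux.cnt_mono_pred (fun B _ h => h.1)
    have hrem : S.ncard + MatchAux.cnt G.toSimple (fun B => Odd B.ncard) (C \ W)
        ≤ MatchAux.cnt G.toSimple (fun B => Odd B.ncard) (Sᶜ \ W) + 1 := by
      rcases em (Odd C.ncard) with hOC | hOC
      · have h := MatchAux.cnt_remove_pos (H := G.toSimple) (fun B => Odd B.ncard)
          hCblk hWC hWne hOC
        rw [hbar] at h
        omega
      · have h := MatchAux.cnt_remove_neg (H := G.toSimple) (fun B => Odd B.ncard)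
          hCblk hWC hWne hOC
        rw [hbar] at h
        omega
    -- rewrite as complement
    set W2 : Set V := S ∪ W with hW2
    have hcompl : Sᶜ \ W = W2ᶜ := by
      ext y
      simp only [hW2, Set.mem_diff, Set.mem_compl_iff, Set.mem_union]
      tauto
    have hdSW : Disjoint S W := by
      rw [Set.disjoint_left]
      intro a ha haW
      exact (hCS (hWC haW)) ha
    have hW2card : W2.ncard = S.ncard + T'.ncard + 1 := by
      rw [hW2, Set.ncard_union_eq hdSW, hWcard]
      omega
    have hcc : W2.ncard + W2ᶜ.ncard = Nat.card V :=
      Set.ncard_add_ncard_compl W2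
    have hpar2 := MatchAux.cnt_odd_parity (H := G.toSimple) W2ᶜ
    have hge : S.ncard + T'.ncard ≤ MatchAux.cnt G.toSimple (fun B => Odd B.ncard) W2ᶜ := by
      rw [← hcompl]
      rw [hCW] at hgt
      omega
    have hW2le : W2.ncard ≤ Nat.card V := by omega
    have hgap : ∃ k, MatchAux.cnt G.toSimple (fun B => Odd B.ncard) W2ᶜ = W2.ncard + 2 * k := by
      refine ⟨(MatchAux.cnt G.toSimple (fun B => Odd B.ncard) W2ᶜ - W2.ncard) / 2, by omega⟩
    obtain ⟨k, hk⟩ := hgap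
    obtain ⟨W', hW'sub, hW'eq⟩ := MatchAux.exists_barrier_ext (H := G.toSimple) k W2 hk
    have hW'bar : G.IsBarrier W' := by
      rw [Multigraph.IsBarrier, Multigraph.theta, MatchAux.card_odd_comps (H := G.toSimple),
        Nat.card_coe_set_eq]
      exact hW'eq
    have hSW' : S ⊆ W' := (Set.subset_union_left).trans hW'sub
    have hW'S := hmax W' hW'bar hSW'
    have huW' : u ∈ W' := hW'sub (Set.mem_union_right _ (Set.mem_insert _ _))
    rw [hW'S] at huW'
    exact (hCS huC) huW'
  obtain ⟨M, hM⟩ := Multigraph.loop_tutte G ((C \ {u}).ncard) (C \ {u}) le_rfl hcond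
  exact ⟨M, hM⟩
end
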